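/- arXiv:1511.03828 — 11 statements merged into one kernel-verified Lean document; each statement's English description precedes it below -/
import Mathlib

section
/- The family K(r,n,a,d) := ⋃_{i=0}^{⌊d/u⌋} D(U(a+i·1, d−ui)), where u = n−r+1, is r-wise s-union: for any r vectors x₁,…,x_r ∈ K, the weight of their coordinatewise maximum x₁∨⋯∨x_r is at most s. -/
/-- The family `K(r,n,a,d)` is `r`-wise `s`-union. Here `K` is the union over
`0 ≤ i ≤ ⌊d/u⌋` (with `u = n-r+1`) of the down-sets of the spheres
`U(a + i·1, d - u·i)`, and `|a| = s - r·d`. -/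
theorem stmt0 (n r s d : ℕ) (hr : 2 ≤ r) (hn : r ≤ n)
    (a : Fin n → ℕ) (ha : (∑ i, a i) + r * d = s)
    (K : Set (Fin n → ℕ))
    (hK : K = {x | ∃ i ≤ d / (n - r + 1), ∃ ε : Fin n → ℕ,
      (∑ j, ε j) = d - (n - r + 1) * i ∧ x ≤ fun j => a j + i + ε j})
    (f : Fin r → (Fin n → ℕ)) (hf : ∀ t, f t ∈ K) :
    (∑ j, Finset.univ.sup fun t => f t j) ≤ s := by
  set u := n - r + 1 with hu_def
  have hu : 1 ≤ u := by omega
  simp only [hK, Set.mem_setOf_eq] at hf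
  choose i hi ε hε hle using hf
  have hle' : ∀ t j, f t j ≤ a j + i t + ε t j := fun t j => hle t j
  have hud : ∀ t, u * i t ≤ d := by
    intro t
    calc u * i t ≤ u * (d / u) := Nat.mul_le_mul_left u (hi t)
    _ ≤ d := Nat.mul_div_le d u
  have hii : ∀ t, i t ≤ u * i t := fun t => Nat.le_mul_of_pos_left (i t) hu
  have hε' : ∀ t, (∑ j, ε t j) + u * i t = d := by
    intro t
    rw [hε t]
    exact Nat.sub_add_cancel (hud t)
  obtain ⟨t1, -, hm0⟩ := Finset.exists_max_image Finset.univ i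
    ⟨⟨0, by omega⟩, Finset.mem_univ _⟩
  set m := i t1 with hm_def
  have hm' : ∀ t, i t ≤ m := fun t => hm0 t (Finset.mem_univ t)
  -- key bound: for each t, the "excess" sum plus m is at most d
  have key : ∀ t, (∑ j, (ε t j - (m - i t))) + m ≤ d := by
    intro t
    by_cases hall : ∀ j, ε t j ≤ m - i t
    · have hz : ∑ j, (ε t j - (m - i t)) = 0 :=
        Finset.sum_eq_zero fun j _ => Nat.sub_eq_zero_of_le (hall j)
      have h1 := hud t1
      have h2 := hii t1
      rw [hz]
      omega
    · push_neg at hall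
      obtain ⟨j0, hj0⟩ := hall
      have hstep : (∑ j, (ε t j - (m - i t))) + (m - i t) ≤ ∑ j, ε t j := by
        have he1 : (∑ j ∈ Finset.univ.erase j0, (ε t j - (m - i t)))
            + (ε t j0 - (m - i t)) = ∑ j, (ε t j - (m - i t)) :=
          Finset.sum_erase_add _ _ (Finset.mem_univ j0)
        have he2 : (∑ j ∈ Finset.univ.erase j0, ε t j) + ε t j0 = ∑ j, ε t j :=
          Finset.sum_erase_add _ _ (Finset.mem_univ j0)
        have hsle : (∑ j ∈ Finset.univ.erase j0, (ε t j - (m - i t)))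
            ≤ ∑ j ∈ Finset.univ.erase j0, ε t j :=
          Finset.sum_le_sum fun j _ => Nat.sub_le _ _
        omega
      have h1 := hε' t
      have h2 := hii t
      have h3 := hm' t
      omega
  -- per-coordinate bound on the sup
  have main : (∑ j, Finset.univ.sup fun t => f t j)
      ≤ ∑ j, (a j + m + ε t1 j + ∑ t ∈ Finset.univ.erase t1, (ε t j - (m - i t))) := by
    apply Finset.sum_le_sum
    intro j _
    apply Finset.sup_le
    intro t _
    by_cases ht : t = t1
    · subst ht
      have h1 := hle' t j
      omega
    · have h1 := hle' t j
      have h2 : (ε t j - (m - i t)) ≤ ∑ t' ∈ Finset.univ.erase t1, (ε t' j - (m - i t')) :=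
        Finset.single_le_sum (f := fun t' => ε t' j - (m - i t')) (fun _ _ => Nat.zero_le _)
          (Finset.mem_erase.mpr ⟨ht, Finset.mem_univ t⟩)
      have h3 := hm' t
      omega
  -- expand the right-hand side
  have expand : (∑ j, (a j + m + ε t1 j + ∑ t ∈ Finset.univ.erase t1, (ε t j - (m - i t))))
      = (∑ j, a j) + n * m + (∑ j, ε t1 j)
        + ∑ t ∈ Finset.univ.erase t1, ∑ j, (ε t j - (m - i t)) := by
    rw [Finset.sum_add_distrib, Finset.sum_add_distrib, Finset.sum_add_distrib,
        Finset.sum_const, Finset.sum_comm]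
    simp [mul_comm]
  have hcard : (Finset.univ.erase t1).card = r - 1 := by
    rw [Finset.card_erase_of_mem (Finset.mem_univ t1), Finset.card_univ, Fintype.card_fin]
  have hsum2 : (∑ t ∈ Finset.univ.erase t1, ∑ j, (ε t j - (m - i t))) + (r - 1) * m
      ≤ (r - 1) * d := by
    have : ∑ t ∈ Finset.univ.erase t1, ((∑ j, (ε t j - (m - i t))) + m)
        ≤ ∑ t ∈ Finset.univ.erase t1, d :=
      Finset.sum_le_sum fun t _ => key t
    rwa [Finset.sum_add_distrib, Finset.sum_const, Finset.sum_const, hcard,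
      smul_eq_mul, smul_eq_mul] at this
  have hE := hε' t1
  -- linear arithmetic glue for the products
  have e0 : u * m = u * i t1 := by rw [hm_def]
  have e1 : n * m = u * m + (r - 1) * m := by
    rw [← Nat.add_mul]
    congr 1
    omega
  have e3 : (r - 1) * d + d = r * d := by
    have : ((r - 1) + 1) * d = (r - 1) * d + 1 * d := Nat.add_mul _ _ _
    have hr1 : (r - 1) + 1 = r := by omega
    rw [hr1] at this
    omega
  omega
end

section
/- Every element of K(r,n,a,d) satisfies the linear inequalities defining the polytope P: each coordinate is non-negative, and for every subset I ⊆ [n] with 1 ≤ |I| ≤ n−r+1, the sum of coordinates over I is at most (∑_{i∈I} a_i) + d. In other words, K ⊆ L, where L is the set of integer lattice points of P. -/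
/-- `K ⊆ L`: every element of `K(r,n,a,d)` satisfies the defining inequalities
of the polytope `P`: nonnegative coordinates (automatic in `ℕ`), and for every
`I ⊆ [n]` with `1 ≤ |I| ≤ n-r+1`, `∑_{i∈I} x_i ≤ ∑_{i∈I} a_i + d`. -/
theorem stmt1 (n r s d : ℕ) (hr : 2 ≤ r) (hn : r ≤ n)
    (a : Fin n → ℕ) (ha : (∑ i, a i) + r * d = s)
    (K : Set (Fin n → ℕ))
    (hK : K = {x | ∃ i ≤ d / (n - r + 1), ∃ ε : Fin n → ℕ,
      (∑ j, ε j) = d - (n - r + 1) * i ∧ x ≤ fun j => a j + i + ε j}) :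
    ∀ x ∈ K, ∀ I : Finset (Fin n), 1 ≤ I.card → I.card ≤ n - r + 1 →
      ∑ i ∈ I, x i ≤ (∑ i ∈ I, a i) + d := by
  subst hK
  rintro x ⟨i, hi, ε, hε, hx⟩ I hI1 hI2
  set u := n - r + 1 with hu
  have hui : u * i ≤ d := le_trans (Nat.mul_le_mul_left u hi) (Nat.mul_div_le d u)
  have h1 : ∑ j ∈ I, x j ≤ ∑ j ∈ I, (a j + i + ε j) :=
    Finset.sum_le_sum fun j _ => hx j
  have h2 : ∑ j ∈ I, (a j + i + ε j) = (∑ j ∈ I, a j) + I.card * i + ∑ j ∈ I, ε j := by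
    rw [Finset.sum_add_distrib, Finset.sum_add_distrib, Finset.sum_const, smul_eq_mul]
  have h3 : ∑ j ∈ I, ε j ≤ d - u * i := by
    rw [← hε]; exact Finset.sum_le_sum_of_subset (Finset.subset_univ I)
  calc ∑ j ∈ I, x j ≤ (∑ j ∈ I, a j) + I.card * i + (d - u * i) := by
        exact (h1.trans_eq h2).trans (Nat.add_le_add_left h3 _)
    _ ≤ (∑ j ∈ I, a j) + u * i + (d - u * i) := by
        gcongr
    _ = (∑ j ∈ I, a j) + d := by omega
end

section
/- Every integer lattice point of the polytope P lies in K(r,n,a,d): if x ∈ ℕⁿ satisfies ∑_{i∈I} x_i ≤ (∑_{i∈I} a_i) + d for every I ⊆ [n] with 1 ≤ |I| ≤ n−r+1, then there exists i' with 0 ≤ i' ≤ ⌊d/(n−r+1)⌋ such that |x \ (a + i'·1)| ≤ d − (n−r+1)·i'. In other words, L ⊆ K. -/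
/-- `L ⊆ K`: if `x ∈ ℕⁿ` satisfies `∑_{i∈I} x_i ≤ ∑_{i∈I} a_i + d` for all
`I ⊆ [n]` with `1 ≤ |I| ≤ n-r+1`, then there is `i'` with
`0 ≤ i' ≤ ⌊d/(n-r+1)⌋` and `|x \ (a + i'·1)| ≤ d - (n-r+1)·i'`. -/
theorem stmt2 (n r s d : ℕ) (hr : 2 ≤ r) (hn : r ≤ n)
    (a : Fin n → ℕ) (ha : (∑ i, a i) + r * d = s)
    (x : Fin n → ℕ)
    (hx : ∀ I : Finset (Fin n), 1 ≤ I.card → I.card ≤ n - r + 1 →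
      ∑ i ∈ I, x i ≤ (∑ i ∈ I, a i) + d) :
    ∃ i' ≤ d / (n - r + 1),
      (∑ j, (x j - (a j + i'))) ≤ d - (n - r + 1) * i' := by
  set u := n - r + 1 with hu
  have hu0 : 0 < u := Nat.succ_pos _
  have hun : u ≤ n := by omega
  set e : Fin n → ℕ := fun j => x j - a j with he
  -- pick T of card u maximizing ∑ e
  have hne : (Finset.univ.powersetCard u : Finset (Finset (Fin n))).Nonempty := by
    apply Finset.powersetCard_nonempty.mpr
    simpa using hun
  obtain ⟨T, hTmem, hTmax⟩ :=
    Finset.exists_max_image (Finset.univ.powersetCard u) (fun T => ∑ j ∈ T, e j) hne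
  have hTcard : T.card = u := (Finset.mem_powersetCard.mp hTmem).2
  have hTne : T.Nonempty := Finset.card_pos.mp (by omega)
  -- exchange property
  have hexch : ∀ j ∉ T, ∀ k ∈ T, e j ≤ e k := by
    intro j hj k hk
    by_contra h
    push_neg at h
    have hj' : j ∉ T.erase k := fun hm => hj (Finset.mem_of_mem_erase hm)
    have hT' : insert j (T.erase k) ∈ Finset.univ.powersetCard u := by
      rw [Finset.mem_powersetCard]
      refine ⟨Finset.subset_univ _, ?_⟩
      rw [Finset.card_insert_of_notMem hj', Finset.card_erase_of_mem hk, hTcard]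
      omega
    have h1 := hTmax _ hT'
    rw [Finset.sum_insert hj'] at h1
    have h2 : ∑ j ∈ T, e j = e k + ∑ j ∈ T.erase k, e j :=
      (Finset.add_sum_erase _ _ hk).symm
    simp only at h1 h2
    omega
  -- i' := min of e over T
  obtain ⟨k₀, hk₀T, hk₀min⟩ := Finset.exists_min_image T e hTne
  set i' : ℕ := e k₀ with hi'
  -- ∑_{j∈T} e j ≤ d
  have hTd : ∑ j ∈ T, e j ≤ d := by
    set I := T.filter (fun j => 0 < e j) with hI
    have hsub : I ⊆ T := Finset.filter_subset _ _
    have hsum : ∑ j ∈ T, e j = ∑ j ∈ I, e j := by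
      refine (Finset.sum_subset hsub ?_).symm
      intro j hj hjI
      simp only [hI, Finset.mem_filter, not_and, not_lt] at hjI
      exact Nat.le_zero.mp (hjI hj)
    rcases I.eq_empty_or_nonempty with hIe | hIne
    · rw [hsum, hIe]; simp
    · have hc1 : 1 ≤ I.card := Finset.card_pos.mpr hIne
      have hc2 : I.card ≤ u := le_trans (Finset.card_le_card hsub) (le_of_eq hTcard)
      have hxI := hx I hc1 hc2
      have hax : ∑ j ∈ I, e j + ∑ j ∈ I, a j = ∑ j ∈ I, x j := by
        rw [← Finset.sum_add_distrib]
        refine Finset.sum_congr rfl fun j hj => ?_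
        have : 0 < e j := by
          have := (Finset.mem_filter.mp hj).2
          simpa using this
        simp only [he] at this ⊢
        omega
      omega
  have hui' : u * i' ≤ ∑ j ∈ T, e j := by
    have := Finset.card_nsmul_le_sum T e i' (fun k hk => hk₀min k hk)
    simpa [hTcard, smul_eq_mul] using this
  refine ⟨i', ?_, ?_⟩
  · rw [Nat.le_div_iff_mul_le hu0, mul_comm]
    omega
  · have hsplit := Finset.sum_add_sum_compl T (fun j => x j - (a j + i'))
    have hcompl : ∑ j ∈ Tᶜ, (x j - (a j + i')) = 0 := by
      refine Finset.sum_eq_zero fun j hj => ?_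
      have hjT : j ∉ T := by simpa using hj
      have h1 : e j ≤ i' := hexch j hjT k₀ hk₀T
      simp only [he] at h1 ⊢
      omega
    have hT1 : (∑ j ∈ T, (x j - (a j + i'))) + u * i' = ∑ j ∈ T, e j := by
      have : ∑ j ∈ T, ((x j - (a j + i')) + i') = ∑ j ∈ T, e j := by
        refine Finset.sum_congr rfl fun j hj => ?_
        have h1 : i' ≤ e j := hk₀min j hj
        simp only [he] at h1 ⊢
        omega
      rw [Finset.sum_add_distrib, Finset.sum_const, smul_eq_mul, hTcard] at this
      have hc : i' * u = u * i' := mul_comm i' u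
      omega
    omega
end

section
/- The sets K(r,n,a,d) and L(r,n,a,d) are equal, and both are r-wise s-union families. -/
open Finset

private lemma auxB (c u i d : ℕ) (h : u * i ≤ d) : c * i + (d - u * i) ≤ d + (c - u) * i := by
  have h1 : c * i ≤ u * i + (c - u) * i := by
    calc c * i ≤ (u + (c - u)) * i := Nat.mul_le_mul_right _ (by omega)
      _ = u * i + (c - u) * i := add_mul _ _ _
  omega

private lemma auxA {α : Type*} [DecidableEq α] (T : Finset α) (c : α → ℕ) (u r : ℕ)
    (hu : 1 ≤ u) (hk : T.card ≤ r) (hc : ∀ t ∈ T, 1 ≤ c t)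
    (hsum : ∑ t ∈ T, c t ≤ u + r - 1) :
    ∑ t ∈ T, (c t - u) ≤ (r - T.card) * u := by
  rcases eq_or_lt_of_le hk with h | h
  · have hz : ∀ t ∈ T, c t - u = 0 := by
      intro t ht
      have h1 : ∑ x ∈ T.erase t, c x + c t = ∑ x ∈ T, c x := Finset.sum_erase_add T c ht
      have h2 : (T.erase t).card ≤ ∑ x ∈ T.erase t, c x := by
        rw [Finset.card_eq_sum_ones]
        exact Finset.sum_le_sum (fun x hx => hc x (Finset.mem_of_mem_erase hx))
      have h3 : (T.erase t).card = T.card - 1 := Finset.card_erase_of_mem ht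
      have h4 : 1 ≤ T.card := Finset.card_pos.mpr ⟨t, ht⟩
      omega
    calc ∑ t ∈ T, (c t - u) = ∑ t ∈ T, 0 := Finset.sum_congr rfl hz
      _ = 0 := Finset.sum_const_zero
      _ ≤ _ := Nat.zero_le _
  · have h1 : ∑ t ∈ T, (c t - u) ≤ ∑ t ∈ T, (c t - 1) :=
      Finset.sum_le_sum (fun t _ => Nat.sub_le_sub_left hu (c t))
    have h2 : ∑ t ∈ T, (c t - 1) + T.card = ∑ t ∈ T, c t := by
      rw [Finset.card_eq_sum_ones, ← Finset.sum_add_distrib]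
      exact Finset.sum_congr rfl (fun t ht => by have := hc t ht; omega)
    obtain ⟨m, hm⟩ : ∃ m, r - T.card = m + 1 := ⟨r - T.card - 1, by omega⟩
    have h4 : m ≤ m * u := Nat.le_mul_of_pos_right _ hu
    have h5 : (r - T.card) * u = m * u + u := by rw [hm, add_mul, one_mul]
    omega

private lemma repL (n r d : ℕ) (hr : 2 ≤ r) (hn : r ≤ n) (a x : Fin n → ℕ)
    (hx : ∀ I : Finset (Fin n), 1 ≤ I.card → I.card ≤ n - r + 1 →
      ∑ i ∈ I, x i ≤ (∑ i ∈ I, a i) + d) :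
    ∃ i, (n - r + 1) * i ≤ d ∧ (∑ j, (x j - a j - i)) ≤ d - (n - r + 1) * i := by
  classical
  set u := n - r + 1 with hudef
  have hu : 1 ≤ u := by omega
  set t : Fin n → ℕ := fun j => x j - a j with htdef
  have htj : ∀ j, t j = x j - a j := fun _ => rfl
  have hP : ∃ i, (univ.filter (fun j => i < t j)).card ≤ u := by
    refine ⟨∑ j, t j, ?_⟩
    have he : univ.filter (fun j => (∑ j, t j) < t j) = ∅ := by
      apply Finset.filter_eq_empty_iff.mpr
      intro j _
      push_neg
      exact Finset.single_le_sum (fun _ _ => Nat.zero_le _) (mem_univ j)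
    rw [he]
    simp
  set i := Nat.find hP with hidef
  have hPi : (univ.filter (fun j => i < t j)).card ≤ u := Nat.find_spec hP
  set B := univ.filter (fun j => i < t j) with hBdef
  have hBmem : ∀ j, j ∈ B ↔ i < t j := by
    intro j; rw [hBdef, Finset.mem_filter]; simp
  have key : ∀ I : Finset (Fin n), 1 ≤ I.card → I.card ≤ u → (∀ j ∈ I, 1 ≤ t j) →
      ∑ j ∈ I, t j ≤ d := by
    intro I h1 h2 h3
    have hxa : ∑ j ∈ I, x j = ∑ j ∈ I, a j + ∑ j ∈ I, t j := by
      rw [← Finset.sum_add_distrib]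
      refine Finset.sum_congr rfl (fun j hj => ?_)
      have h4 := h3 j hj
      have h5 := htj j
      omega
    have := hx I h1 h2
    omega
  by_cases hiz : i = 0
  · by_cases hBe : B = ∅
    · refine ⟨0, by simp, ?_⟩
      have hz : ∀ j, x j - a j - 0 = 0 := by
        intro j
        have hj : j ∉ B := by rw [hBe]; exact notMem_empty j
        rw [hBmem] at hj
        have := htj j
        omega
      rw [Finset.sum_congr rfl (fun j _ => hz j), Finset.sum_const_zero]
      omega
    · have hBne : B.Nonempty := Finset.nonempty_iff_ne_empty.mpr hBe
      have h1 : 1 ≤ B.card := Finset.card_pos.mpr hBne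
      have h3 : ∀ j ∈ B, 1 ≤ t j := by
        intro j hj; rw [hBmem] at hj; omega
      have hsB := key B h1 hPi h3
      refine ⟨0, by simp, ?_⟩
      have hsum0 : ∑ j, (x j - a j - 0) = ∑ j ∈ B, t j := by
        rw [Finset.sum_congr rfl (fun j (_ : j ∈ univ) => by
          have := htj j; omega : ∀ j ∈ univ, x j - a j - 0 = t j)]
        symm
        apply Finset.sum_subset (Finset.subset_univ B)
        intro j _ hj
        rw [hBmem] at hj
        omega
      omega
  · have hip : 1 ≤ i := by omega
    have hmin : ¬ ((univ.filter (fun j => i - 1 < t j)).card ≤ u) :=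
      Nat.find_min hP (by omega)
    push_neg at hmin
    have hBsub : B ⊆ univ.filter (fun j => i - 1 < t j) := by
      intro j hj
      rw [hBmem] at hj
      rw [Finset.mem_filter]
      exact ⟨mem_univ j, by omega⟩
    obtain ⟨I, hBI, hIA, hIcard⟩ := Finset.exists_subsuperset_card_eq hBsub hPi (by omega)
    have hIt : ∀ j ∈ I, i ≤ t j := by
      intro j hj
      have h5 := hIA hj
      rw [Finset.mem_filter] at h5
      omega
    have hsI := key I (by omega) (by omega) (fun j hj => by have := hIt j hj; omega)
    have hsplit : ∑ j ∈ I, (t j - i) + I.card * i = ∑ j ∈ I, t j := by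
      calc ∑ j ∈ I, (t j - i) + I.card * i = ∑ j ∈ I, ((t j - i) + i) := by
            rw [Finset.sum_add_distrib, Finset.sum_const, smul_eq_mul]
        _ = ∑ j ∈ I, t j := Finset.sum_congr rfl (fun j hj => by have := hIt j hj; omega)
    have hui : u * i ≤ d := by
      have : I.card * i ≤ ∑ j ∈ I, t j := by omega
      rw [hIcard] at this
      omega
    have hf1 : ∑ j, (t j - i) = ∑ j ∈ B, (t j - i) := by
      symm
      apply Finset.sum_subset (Finset.subset_univ B)
      intro j _ hj
      rw [hBmem] at hj
      omega
    have hf2 : ∑ j ∈ B, (t j - i) ≤ ∑ j ∈ I, (t j - i) :=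
      Finset.sum_le_sum_of_subset hBI
    have hgoal : ∑ j, (x j - a j - i) = ∑ j, (t j - i) :=
      Finset.sum_congr rfl (fun j _ => by have := htj j; omega)
    refine ⟨i, hui, ?_⟩
    rw [hgoal, hf1]
    rw [hIcard] at hsplit
    omega
/-- `K(r,n,a,d) = L(r,n,a,d)`, and both are `r`-wise `s`-union families. -/
theorem stmt3 (n r s d : ℕ) (hr : 2 ≤ r) (hn : r ≤ n)
    (a : Fin n → ℕ) (ha : (∑ i, a i) + r * d = s)
    (K L : Set (Fin n → ℕ))
    (hK : K = {x | ∃ i ≤ d / (n - r + 1), ∃ ε : Fin n → ℕ,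
      (∑ j, ε j) = d - (n - r + 1) * i ∧ x ≤ fun j => a j + i + ε j})
    (hL : L = {x | ∀ I : Finset (Fin n), 1 ≤ I.card → I.card ≤ n - r + 1 →
      ∑ i ∈ I, x i ≤ (∑ i ∈ I, a i) + d}) :
    K = L ∧
    (∀ f : Fin r → (Fin n → ℕ), (∀ t, f t ∈ K) →
      (∑ j, Finset.univ.sup fun t => f t j) ≤ s) ∧
    (∀ f : Fin r → (Fin n → ℕ), (∀ t, f t ∈ L) →
      (∑ j, Finset.univ.sup fun t => f t j) ≤ s) := by
  classical
  have hupos : 0 < n - r + 1 := by omega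
  -- K ⊆ L
  have hKL : K ⊆ L := by
    intro x hx
    rw [hK] at hx
    obtain ⟨i, hid, ε, hεsum, hxle⟩ := hx
    rw [hL]
    intro I hI1 hI2
    have hui : (n - r + 1) * i ≤ d := by
      calc (n - r + 1) * i ≤ (n - r + 1) * (d / (n - r + 1)) := Nat.mul_le_mul_left _ hid
        _ = d / (n - r + 1) * (n - r + 1) := mul_comm _ _
        _ ≤ d := Nat.div_mul_le_self d _
    have h1 : ∑ j ∈ I, x j ≤ ∑ j ∈ I, (a j + i + ε j) :=
      Finset.sum_le_sum (fun j _ => hxle j)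
    have h2 : ∑ j ∈ I, (a j + i + ε j)
        = (∑ j ∈ I, a j) + I.card * i + ∑ j ∈ I, ε j := by
      rw [Finset.sum_add_distrib, Finset.sum_add_distrib, Finset.sum_const, smul_eq_mul]
    have h3 : ∑ j ∈ I, ε j ≤ d - (n - r + 1) * i := by
      rw [← hεsum]
      exact Finset.sum_le_sum_of_subset (Finset.subset_univ _)
    have h4 : I.card * i ≤ (n - r + 1) * i := Nat.mul_le_mul_right _ hI2
    omega
  -- L ⊆ K
  have hLK : L ⊆ K := by
    intro x hx
    rw [hL] at hx
    obtain ⟨i, hui, hf⟩ := repL n r d hr hn a x hx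
    rw [hK]
    refine ⟨i, ?_, fun j => (x j - a j - i) +
      (if j = (⟨0, by omega⟩ : Fin n) then (d - (n - r + 1) * i - ∑ j, (x j - a j - i)) else 0),
      ?_, ?_⟩
    · rw [Nat.le_div_iff_mul_le hupos]
      rw [mul_comm]
      exact hui
    · rw [Finset.sum_add_distrib, Finset.sum_ite_eq' Finset.univ]
      simp only [Finset.mem_univ, if_true]
      omega
    · intro j
      simp only
      have h1 : (0:ℕ) ≤ if j = (⟨0, by omega⟩ : Fin n)
        then (d - (n - r + 1) * i - ∑ j, (x j - a j - i)) else 0 := Nat.zero_le _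
      omega
  have hKeqL : K = L := Set.Subset.antisymm hKL hLK
  -- representation of K members
  have hrep : ∀ x ∈ K, ∃ i, (n - r + 1) * i ≤ d ∧ ∃ ε : Fin n → ℕ,
      (∑ j, ε j) = d - (n - r + 1) * i ∧ ∀ j, x j ≤ a j + i + ε j := by
    intro x hx
    rw [hK] at hx
    obtain ⟨i, hid, ε, hεsum, hxle⟩ := hx
    refine ⟨i, ?_, ε, hεsum, fun j => hxle j⟩
    calc (n - r + 1) * i ≤ (n - r + 1) * (d / (n - r + 1)) := Nat.mul_le_mul_left _ hid
      _ = d / (n - r + 1) * (n - r + 1) := mul_comm _ _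
      _ ≤ d := Nat.div_mul_le_self d _
  -- union property for K
  have hunionK : ∀ f : Fin r → (Fin n → ℕ), (∀ t, f t ∈ K) →
      (∑ j, Finset.univ.sup fun t => f t j) ≤ s := by
    intro f hf
    choose i hi ε hε hle using fun t => hrep (f t) (hf t)
    have hne : Nonempty (Fin r) := ⟨⟨0, by omega⟩⟩
    have hgex : ∀ j : Fin n, ∃ t : Fin r, (Finset.univ.sup fun t => f t j) = f t j := by
      intro j
      obtain ⟨t, _, h⟩ := Finset.exists_mem_eq_sup Finset.univ Finset.univ_nonempty
        (fun t => f t j)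
      exact ⟨t, h⟩
    choose g hg using hgex
    set C : Fin r → Finset (Fin n) := fun t => Finset.univ.filter (fun j => g j = t) with hC
    set T : Finset (Fin r) := Finset.univ.filter (fun t => (C t).Nonempty) with hT
    have hsum1 : (∑ j, Finset.univ.sup fun t => f t j) = ∑ t : Fin r, ∑ j ∈ C t, f t j := by
      rw [Finset.sum_congr rfl (fun j (_ : j ∈ Finset.univ) => hg j)]
      rw [← Finset.sum_fiberwise Finset.univ g (fun j => f (g j) j)]
      refine Finset.sum_congr rfl (fun t _ => ?_)
      refine Finset.sum_congr rfl (fun j hj => ?_)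
      simp only [hC, Finset.mem_filter] at hj
      rw [hj.2]
    have hsum2 : ∑ t : Fin r, ∑ j ∈ C t, f t j = ∑ t ∈ T, ∑ j ∈ C t, f t j := by
      symm
      apply Finset.sum_subset (Finset.subset_univ T)
      intro t _ ht
      rw [hT, Finset.mem_filter] at ht
      push_neg at ht
      have : C t = ∅ := ht (Finset.mem_univ t)
      rw [this, Finset.sum_empty]
    have hclass : ∀ t ∈ T, ∑ j ∈ C t, f t j
        ≤ (∑ j ∈ C t, a j) + d + ((C t).card - (n - r + 1)) * i t := by
      intro t _
      have h1 : ∑ j ∈ C t, f t j ≤ ∑ j ∈ C t, (a j + i t + ε t j) :=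
        Finset.sum_le_sum (fun j _ => hle t j)
      have h2 : ∑ j ∈ C t, (a j + i t + ε t j)
          = (∑ j ∈ C t, a j) + (C t).card * i t + ∑ j ∈ C t, ε t j := by
        rw [Finset.sum_add_distrib, Finset.sum_add_distrib, Finset.sum_const, smul_eq_mul]
      have h3 : ∑ j ∈ C t, ε t j ≤ d - (n - r + 1) * i t := by
        rw [← hε t]
        exact Finset.sum_le_sum_of_subset (Finset.subset_univ _)
      have h4 := auxB ((C t).card) (n - r + 1) (i t) d (hi t)
      omega
    have hcardsum : ∑ t : Fin r, (C t).card = n := by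
      have h1 : (Finset.univ : Finset (Fin n)).card
          = ∑ t : Fin r, (C t).card :=
        Finset.card_eq_sum_card_fiberwise (fun x _ => Finset.mem_univ (g x))
      rw [← h1, Finset.card_univ, Fintype.card_fin]
    have hkr : T.card ≤ r := by
      calc T.card ≤ (Finset.univ : Finset (Fin r)).card := Finset.card_le_univ T
        _ = r := by rw [Finset.card_univ, Fintype.card_fin]
    have hauxA : ∑ t ∈ T, ((C t).card - (n - r + 1)) ≤ (r - T.card) * (n - r + 1) := by
      apply auxA T (fun t => (C t).card) (n - r + 1) r (by omega) hkr
      · intro t ht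
        rw [hT, Finset.mem_filter] at ht
        exact Finset.card_pos.mpr ht.2
      · calc ∑ t ∈ T, (C t).card ≤ ∑ t : Fin r, (C t).card :=
            Finset.sum_le_sum_of_subset (Finset.subset_univ T)
          _ = n := hcardsum
          _ ≤ (n - r + 1) + r - 1 := by omega
    have hbig : ∑ t ∈ T, ((C t).card - (n - r + 1)) * i t ≤ (r - T.card) * d := by
      apply Nat.le_of_mul_le_mul_left _ hupos
      calc (n - r + 1) * ∑ t ∈ T, ((C t).card - (n - r + 1)) * i t
          = ∑ t ∈ T, ((C t).card - (n - r + 1)) * ((n - r + 1) * i t) := by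
            rw [Finset.mul_sum]
            exact Finset.sum_congr rfl (fun t _ => by ring)
        _ ≤ ∑ t ∈ T, ((C t).card - (n - r + 1)) * d :=
            Finset.sum_le_sum (fun t _ => Nat.mul_le_mul_left _ (hi t))
        _ = (∑ t ∈ T, ((C t).card - (n - r + 1))) * d := (Finset.sum_mul _ _ _).symm
        _ ≤ ((r - T.card) * (n - r + 1)) * d := Nat.mul_le_mul_right _ hauxA
        _ = (n - r + 1) * ((r - T.card) * d) := by ring
    have hAsum : ∑ t ∈ T, ∑ j ∈ C t, a j ≤ ∑ j, a j := by
      calc ∑ t ∈ T, ∑ j ∈ C t, a j ≤ ∑ t : Fin r, ∑ j ∈ C t, a j :=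
          Finset.sum_le_sum_of_subset (Finset.subset_univ T)
        _ = ∑ j, a j := Finset.sum_fiberwise Finset.univ g a
    have hkd : T.card * d + (r - T.card) * d = r * d := by
      rw [← add_mul]
      congr 1
      omega
    calc (∑ j, Finset.univ.sup fun t => f t j) = ∑ t ∈ T, ∑ j ∈ C t, f t j := by
          rw [hsum1, hsum2]
      _ ≤ ∑ t ∈ T, ((∑ j ∈ C t, a j) + d + ((C t).card - (n - r + 1)) * i t) :=
          Finset.sum_le_sum hclass
      _ = (∑ t ∈ T, ∑ j ∈ C t, a j) + T.card * d
          + ∑ t ∈ T, ((C t).card - (n - r + 1)) * i t := by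
          rw [Finset.sum_add_distrib, Finset.sum_add_distrib, Finset.sum_const, smul_eq_mul]
      _ ≤ (∑ j, a j) + T.card * d + (r - T.card) * d := by
          have := add_le_add (add_le_add hAsum (le_refl (T.card * d))) hbig
          omega
      _ = (∑ j, a j) + r * d := by omega
      _ = s := ha
  exact ⟨hKeqL, hunionK, by rw [← hKeqL]; exact hunionK⟩
end

section
/- The cardinality of the base layer D(U(a,d)) ⊆ ℕⁿ equals ∑_{j=0}^{n} C(d+j, j)·σ_{n−j}(a), where σ_k(a) is the k-th elementary symmetric polynomial in a₁,…,a_n. -/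
open Finset

private def Tset (n d : ℕ) (a : Fin n → ℕ) : Finset (Fin n → ℕ) :=
  (Fintype.piFinset fun i => Finset.range (a i + d + 1)).filter fun c => ∑ i, (c i - a i) ≤ d

private def sig (n k : ℕ) (a : Fin n → ℕ) : ℕ :=
  ∑ K ∈ (Finset.univ : Finset (Fin n)).powersetCard k, ∏ i ∈ K, a i

private def Fval (n d : ℕ) (a : Fin n → ℕ) : ℕ :=
  ∑ j ∈ Finset.range (n + 1), (d + j).choose j * sig n (n - j) a

private lemma mem_Tset {n d : ℕ} {a : Fin n → ℕ} {c : Fin n → ℕ} :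
    c ∈ Tset n d a ↔ ∑ i, (c i - a i) ≤ d := by
  simp only [Tset, mem_filter, Fintype.mem_piFinset, mem_range]
  constructor
  · exact fun h => h.2
  · intro h
    refine ⟨fun i => ?_, h⟩
    have h1 : c i - a i ≤ ∑ i, (c i - a i) :=
      Finset.single_le_sum (f := fun i => c i - a i) (fun i _ => Nat.zero_le _) (mem_univ i)
    omega

private lemma sig_zero (n : ℕ) (a : Fin n → ℕ) : sig n 0 a = 1 := by
  simp [sig]

private lemma sig_top (n : ℕ) (a : Fin n → ℕ) : sig n (n + 1) a = 0 := by
  have : (Finset.univ : Finset (Fin n)).powersetCard (n + 1) = ∅ :=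
    Finset.powersetCard_eq_empty.2 (by simp)
  simp [sig, this]

private lemma sig_succ (n k : ℕ) (a : Fin (n + 1) → ℕ) :
    sig (n + 1) (k + 1) a = sig n (k + 1) (Fin.tail a) + a 0 * sig n k (Fin.tail a) := by
  have h0 : (0 : Fin (n + 1)) ∉
      (Finset.univ : Finset (Fin n)).map ⟨Fin.succ, Fin.succ_injective n⟩ := by
    simp only [Finset.mem_map, Function.Embedding.coeFn_mk, mem_univ, true_and]
    rintro ⟨i, hi⟩
    exact (Fin.succ_ne_zero i) hi
  have hdisj : Disjoint
      (((Finset.univ : Finset (Fin n)).map ⟨Fin.succ, Fin.succ_injective n⟩).powersetCard (k + 1))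
      (Finset.image (insert 0)
        (((Finset.univ : Finset (Fin n)).map ⟨Fin.succ, Fin.succ_injective n⟩).powersetCard k)) := by
    rw [Finset.disjoint_left]
    intro K hK hK'
    have hsub := (Finset.mem_powersetCard.1 hK).1
    have : (0 : Fin (n + 1)) ∉ K := fun h => h0 (hsub h)
    obtain ⟨K', _, rfl⟩ := Finset.mem_image.1 hK'
    exact this (Finset.mem_insert_self _ _)
  rw [sig, Fin.univ_succ, Finset.cons_eq_insert,
      Finset.powersetCard_succ_insert h0, Finset.sum_union hdisj]
  congr 1
  · rw [Finset.powersetCard_map, Finset.sum_map]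
    apply Finset.sum_congr rfl
    intro K _
    show ∏ i ∈ K.map ⟨Fin.succ, Fin.succ_injective n⟩, a i = ∏ i ∈ K, Fin.tail a i
    rw [Finset.prod_map]
    rfl
  · rw [Finset.sum_image, Finset.powersetCard_map, Finset.sum_map, sig, Finset.mul_sum]
    · apply Finset.sum_congr rfl
      intro K _
      show ∏ i ∈ insert 0 (K.map ⟨Fin.succ, Fin.succ_injective n⟩), a i
        = a 0 * ∏ i ∈ K, Fin.tail a i
      have h0K : (0 : Fin (n + 1)) ∉ K.map ⟨Fin.succ, Fin.succ_injective n⟩ := by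
        simp only [Finset.mem_map, Function.Embedding.coeFn_mk]
        rintro ⟨i, _, hi⟩
        exact (Fin.succ_ne_zero i) hi
      rw [Finset.prod_insert h0K, Finset.prod_map]
      rfl
    · intro K1 h1 K2 h2 heq
      have n01 : (0 : Fin (n + 1)) ∉ K1 :=
        fun h => h0 ((Finset.mem_powersetCard.1 h1).1 h)
      have n02 : (0 : Fin (n + 1)) ∉ K2 :=
        fun h => h0 ((Finset.mem_powersetCard.1 h2).1 h)
      have := congrArg (fun s => Finset.erase s 0) heq
      simpa [Finset.erase_insert n01, Finset.erase_insert n02] using this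

private lemma hockey (d j : ℕ) :
    ∑ e ∈ Finset.range (d + 1), (e + j).choose j = (d + j + 1).choose (j + 1) := by
  induction d with
  | zero => simp
  | succ d ih =>
      rw [Finset.sum_range_succ, ih, show d + 1 + j = d + j + 1 from by omega,
        Nat.choose_succ_succ (d + j + 1) j]
      simp only [Nat.succ_eq_add_one]
      omega

private lemma Tset_succ (n d : ℕ) (a : Fin (n + 1) → ℕ) :
    Tset (n + 1) d a = (Finset.range (a 0 + d + 1)).biUnion
      (fun x => (Tset n (d - (x - a 0)) (Fin.tail a)).image (Fin.cons x)) := by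
  ext c
  simp only [mem_Tset, Finset.mem_biUnion, Finset.mem_range, Finset.mem_image]
  constructor
  · intro h
    rw [Fin.sum_univ_succ] at h
    refine ⟨c 0, by omega, Fin.tail c, ?_, Fin.cons_self_tail c⟩
    show ∑ i : Fin n, (c (Fin.succ i) - a (Fin.succ i)) ≤ d - (c 0 - a 0)
    omega
  · rintro ⟨x, hx, t, ht, rfl⟩
    rw [Fin.sum_univ_succ]
    simp only [Fin.cons_zero, Fin.cons_succ]
    have : ∑ i, (t i - a i.succ) ≤ d - (x - a 0) := ht
    omega

private lemma card_Tset_succ (n d : ℕ) (a : Fin (n + 1) → ℕ) :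
    (Tset (n + 1) d a).card =
      ∑ x ∈ Finset.range (a 0 + d + 1), (Tset n (d - (x - a 0)) (Fin.tail a)).card := by
  rw [Tset_succ, Finset.card_biUnion]
  · apply Finset.sum_congr rfl
    intro x _
    exact Finset.card_image_of_injective _
      (Fin.cons_right_injective (α := fun _ : Fin (n + 1) => ℕ) x)
  · intro x _ y _ hxy
    rw [Function.onFun, Finset.disjoint_left]
    rintro c hc hc'
    obtain ⟨t, _, rfl⟩ := Finset.mem_image.1 hc
    obtain ⟨t', _, heq⟩ := Finset.mem_image.1 hc'
    apply hxy
    have h := congrFun heq 0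
    simpa using h.symm

private lemma Fval_succ (n d : ℕ) (a : Fin (n + 1) → ℕ) :
    Fval (n + 1) d a =
      (a 0 + 1) * Fval n d (Fin.tail a) + ∑ e ∈ Finset.range d, Fval n e (Fin.tail a) := by
  have key : ∑ e ∈ Finset.range (d + 1), Fval n e (Fin.tail a) =
      ∑ j ∈ Finset.range (n + 1), (d + j + 1).choose (j + 1) * sig n (n - j) (Fin.tail a) := by
    unfold Fval
    rw [Finset.sum_comm]
    apply Finset.sum_congr rfl
    intro j _
    rw [← Finset.sum_mul, hockey]
  unfold Fval
  rw [Finset.sum_range_succ]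
  have hstep : ∀ j ∈ Finset.range (n + 1),
      (d + j).choose j * sig (n + 1) (n + 1 - j) a =
        (d + j).choose j * sig n (n - j + 1) (Fin.tail a)
          + a 0 * ((d + j).choose j * sig n (n - j) (Fin.tail a)) := by
    intro j hj
    have hj' : j ≤ n := by simpa using Nat.lt_succ_iff.1 (Finset.mem_range.1 hj)
    rw [show n + 1 - j = (n - j) + 1 from by omega, sig_succ, Nat.mul_add]
    ring
  rw [Finset.sum_congr rfl hstep, Finset.sum_add_distrib, ← Finset.mul_sum]
  have htop : sig (n + 1) (n + 1 - (n + 1)) a = 1 := by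
    rw [Nat.sub_self]; exact sig_zero _ _
  rw [htop, mul_one]
  have hfirst : ∑ j ∈ Finset.range (n + 1), (d + j).choose j * sig n (n - j + 1) (Fin.tail a)
      = ∑ j ∈ Finset.range n, (d + j + 1).choose (j + 1) * sig n (n - j) (Fin.tail a) := by
    rw [Finset.sum_range_succ']
    have h0 : (d + 0).choose 0 * sig n (n - 0 + 1) (Fin.tail a) = 0 := by
      simp [sig_top]
    rw [h0, add_zero]
    apply Finset.sum_congr rfl
    intro j hj
    have hj' : j < n := Finset.mem_range.1 hj
    rw [show n - (j + 1) + 1 = n - j from by omega, show d + (j + 1) = d + j + 1 from by omega]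
  rw [hfirst]
  have hsum : ∑ j ∈ Finset.range n, (d + j + 1).choose (j + 1) * sig n (n - j) (Fin.tail a)
      + (d + (n + 1)).choose (n + 1)
      = ∑ e ∈ Finset.range (d + 1), Fval n e (Fin.tail a) := by
    rw [key, Finset.sum_range_succ]
    congr 1
    rw [show n - n = 0 from Nat.sub_self n, sig_zero, mul_one,
      show d + n + 1 = d + (n + 1) from by omega]
  have hsplit : ∑ e ∈ Finset.range (d + 1), Fval n e (Fin.tail a)
      = Fval n d (Fin.tail a) + ∑ e ∈ Finset.range d, Fval n e (Fin.tail a) := by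
    rw [Finset.sum_range_succ]; omega
  calc ∑ j ∈ Finset.range n, (d + j + 1).choose (j + 1) * sig n (n - j) (Fin.tail a)
        + a 0 * Fval n d (Fin.tail a) + (d + (n + 1)).choose (n + 1)
      = a 0 * Fval n d (Fin.tail a)
        + (∑ j ∈ Finset.range n, (d + j + 1).choose (j + 1) * sig n (n - j) (Fin.tail a)
          + (d + (n + 1)).choose (n + 1)) := by ring
    _ = a 0 * Fval n d (Fin.tail a)
        + (Fval n d (Fin.tail a) + ∑ e ∈ Finset.range d, Fval n e (Fin.tail a)) := by
          rw [hsum, hsplit]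
    _ = (a 0 + 1) * Fval n d (Fin.tail a) + ∑ e ∈ Finset.range d, Fval n e (Fin.tail a) := by
          ring

private lemma card_Tset : ∀ (n d : ℕ) (a : Fin n → ℕ), (Tset n d a).card = Fval n d a := by
  intro n
  induction n with
  | zero =>
      intro d a
      have : Tset 0 d a = Fintype.piFinset fun i => Finset.range (a i + d + 1) := by
        apply Finset.filter_true_of_mem
        intro c _
        simp
      rw [this, Fintype.card_piFinset]
      simp [Fval, sig]
  | succ n ih =>
      intro d a
      rw [card_Tset_succ, Fval_succ]
      have h1 : ∀ x ∈ Finset.range (a 0 + d + 1),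
          (Tset n (d - (x - a 0)) (Fin.tail a)).card = Fval n (d - (x - a 0)) (Fin.tail a) :=
        fun x _ => ih _ _
      rw [Finset.sum_congr rfl h1,
        show a 0 + d + 1 = (a 0 + 1) + d from by omega, Finset.sum_range_add]
      congr 1
      · have : ∀ x ∈ Finset.range (a 0 + 1),
            Fval n (d - (x - a 0)) (Fin.tail a) = Fval n d (Fin.tail a) := by
          intro x hx
          have := Finset.mem_range.1 hx
          congr 1
          omega
        rw [Finset.sum_congr rfl this, Finset.sum_const, Finset.card_range, smul_eq_mul]
      · have : ∀ x ∈ Finset.range d,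
            Fval n (d - (a 0 + 1 + x - a 0)) (Fin.tail a) = Fval n (d - 1 - x) (Fin.tail a) := by
          intro x hx
          congr 1
          omega
        rw [Finset.sum_congr rfl this]
        exact Finset.sum_range_reflect (fun e => Fval n e (Fin.tail a)) d

/-- `|D(U(a,d))| = ∑_{j=0}^{n} C(d+j, j) · σ_{n-j}(a)`, where `σ_k` is the
`k`-th elementary symmetric polynomial of `a₁,…,a_n`. -/
theorem stmt6 (n d : ℕ) (hn : 1 ≤ n) (a : Fin n → ℕ) :
    {c : Fin n → ℕ | ∃ ε : Fin n → ℕ, (∑ j, ε j) = d ∧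
      c ≤ fun j => a j + ε j}.ncard =
    ∑ j ∈ Finset.range (n + 1), (d + j).choose j *
      (∑ K ∈ (Finset.univ : Finset (Fin n)).powersetCard (n - j),
        ∏ i ∈ K, a i) := by
  have hset : {c : Fin n → ℕ | ∃ ε : Fin n → ℕ, (∑ j, ε j) = d ∧
      c ≤ fun j => a j + ε j} = ↑(Tset n d a) := by
    ext c
    simp only [Set.mem_setOf_eq, Finset.mem_coe, mem_Tset]
    constructor
    · rintro ⟨ε, hε, hle⟩
      calc ∑ i, (c i - a i) ≤ ∑ i, ε i := by
            apply Finset.sum_le_sum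
            intro i _
            have := hle i
            simp only at this
            omega
        _ = d := hε
    · intro h
      set i0 : Fin n := ⟨0, hn⟩
      refine ⟨fun i => (c i - a i) + (if i = i0 then d - ∑ j, (c j - a j) else 0), ?_, ?_⟩
      · rw [Finset.sum_add_distrib, Finset.sum_ite_eq' Finset.univ i0]
        simp only [Finset.mem_univ, if_true]
        omega
      · intro i
        simp only
        have h1 : c i ≤ a i + (c i - a i) := by omega
        exact h1.trans (Nat.add_le_add_left (Nat.le_add_right _ _) _)
  rw [hset, Set.ncard_coe_finset, card_Tset]
  rfl
end

section
/- Let A ⊆ ℕⁿ be r-wise s-union, suppose d := (|m| − s)/(n−r) is a well-defined non-negative integer where m_i := max{x_i : x ∈ A}, set a_i := m_i − d and assume a_i ≥ 0 for all i, and assume all vectors P_i := a + d·e_i belong to A. Then A ⊆ L(r,n,a,d), i.e., every x ∈ A satisfies ∑_{i∈I} x_i ≤ ∑_{i∈I} a_i + d for all I ⊆ [n] with 1 ≤ |I| ≤ n−r+1. -/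
/-- If `A ⊆ ℕⁿ` is `r`-wise `s`-union, `m_i = max{x_i : x ∈ A}`,
`d = (|m| - s)/(n-r) ≥ 0` (encoded by `∑ m = s + (n-r)·d`), `a_i = m_i - d ≥ 0`
(encoded by `a_i + d = m_i`), and all `P_i = a + d·e_i` belong to `A`, then
`A ⊆ L(r,n,a,d)`. -/
theorem stmt7 (n r s d : ℕ) (hr : 2 ≤ r) (hrn : r < n)
    (A : Set (Fin n → ℕ)) (hAfin : A.Finite) (hAne : A.Nonempty)
    (hunion : ∀ f : Fin r → (Fin n → ℕ), (∀ t, f t ∈ A) →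
      (∑ j, Finset.univ.sup fun t => f t j) ≤ s)
    (m a : Fin n → ℕ)
    (hm : ∀ i, IsGreatest {v | ∃ x ∈ A, v = x i} (m i))
    (hd : (∑ i, m i) = s + (n - r) * d)
    (ha : ∀ i, a i + d = m i)
    (hP : ∀ i : Fin n, (fun j => a j + if j = i then d else 0) ∈ A) :
    ∀ x ∈ A, ∀ I : Finset (Fin n), 1 ≤ I.card → I.card ≤ n - r + 1 →
      ∑ i ∈ I, x i ≤ (∑ i ∈ I, a i) + d := by
  intro x hx I hI1 hI2
  classical
  -- s = ∑ a + r * d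
  have hsum_m : (∑ i, m i) = (∑ i, a i) + n * d := by
    have : (∑ i, m i) = ∑ i, (a i + d) :=
      Finset.sum_congr rfl fun i _ => (ha i).symm
    rw [this, Finset.sum_add_distrib, Finset.sum_const, Finset.card_univ,
      Fintype.card_fin, smul_eq_mul]
  have hnd : n * d = (n - r) * d + r * d := by
    rw [← add_mul]
    congr 1
    omega
  have hs : s = (∑ i, a i) + r * d := by
    rw [hsum_m, hnd] at hd
    set u := (n - r) * d
    set v := r * d
    omega
  -- choose C ⊆ Iᶜ with |C| = r - 1
  have hcardc : r - 1 ≤ Iᶜ.card := by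
    rw [Finset.card_compl, Fintype.card_fin]
    omega
  obtain ⟨C, hCsub, hCcard⟩ := Finset.exists_subset_card_eq hcardc
  set P : Fin n → Fin n → ℕ := fun i j => a j + if j = i then d else 0 with hPdef
  let e : {y // y ∈ C} ≃ Fin (r - 1) := C.equivFin.trans (finCongr hCcard)
  set c : Fin (r - 1) → Fin n := fun t => (e.symm t : Fin n) with hcdef
  set f : Fin r → Fin n → ℕ :=
    fun t => if h : (t : ℕ) < r - 1 then P (c ⟨t, h⟩) else x with hfdef
  have hfA : ∀ t, f t ∈ A := by
    intro t
    simp only [hfdef]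
    split_ifs with h
    · exact hP _
    · exact hx
  have key := hunion f hfA
  set g : Fin n → ℕ := fun j => Finset.univ.sup fun t => f t j with hg
  have h1 : ∀ j ∈ I, x j ≤ g j := by
    intro j _
    have ht : ¬ ((⟨r - 1, by omega⟩ : Fin r) : ℕ) < r - 1 := by simp
    have : f ⟨r - 1, by omega⟩ j = x j := by simp only [hfdef, dif_neg ht]
    calc x j = f ⟨r - 1, by omega⟩ j := this.symm
      _ ≤ g j := Finset.le_sup (f := fun t => f t j) (Finset.mem_univ _)
  have h3 : ∀ j, a j ≤ g j := by
    intro j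
    have h0 : ((⟨0, by omega⟩ : Fin r) : ℕ) < r - 1 := by simp; omega
    have : a j ≤ f ⟨0, by omega⟩ j := by
      simp only [hfdef, dif_pos h0, hPdef]
      exact Nat.le_add_right _ _
    exact this.trans (Finset.le_sup (f := fun t => f t j) (Finset.mem_univ _))
  have h2 : ∀ j ∈ C, a j + d ≤ g j := by
    intro j hj
    set t : Fin (r - 1) := e ⟨j, hj⟩ with htdef
    have hct : c t = j := by simp [hcdef, htdef]
    have htlt : ((⟨(t : ℕ), by omega⟩ : Fin r) : ℕ) < r - 1 := t.isLt
    have hfv : f ⟨(t : ℕ), by omega⟩ j = a j + d := by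
      simp only [hfdef, dif_pos htlt, hPdef]
      have : c ⟨(t : ℕ), htlt⟩ = j := by
        rw [← hct]
      rw [this, if_pos rfl]
    calc a j + d = f ⟨(t : ℕ), by omega⟩ j := hfv.symm
      _ ≤ g j := Finset.le_sup (f := fun t => f t j) (Finset.mem_univ _)
  -- sum bounds
  have hI' : ∑ j ∈ I, x j ≤ ∑ j ∈ I, g j := Finset.sum_le_sum h1
  have hC' : ∑ j ∈ C, (a j + d) ≤ ∑ j ∈ C, g j := Finset.sum_le_sum h2
  have hE' : ∑ j ∈ Iᶜ \ C, a j ≤ ∑ j ∈ Iᶜ \ C, g j :=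
    Finset.sum_le_sum fun j _ => h3 j
  have hsplit : ∀ F : Fin n → ℕ,
      (∑ j ∈ I, F j) + ((∑ j ∈ Iᶜ \ C, F j) + ∑ j ∈ C, F j) = ∑ j, F j := by
    intro F
    rw [Finset.sum_sdiff hCsub, Finset.sum_add_sum_compl]
  have hCsum : ∑ j ∈ C, (a j + d) = (∑ j ∈ C, a j) + (r - 1) * d := by
    rw [Finset.sum_add_distrib, Finset.sum_const, hCcard, smul_eq_mul]
  have hrd : r * d = (r - 1) * d + d := by
    have h : r = r - 1 + 1 := by omega
    conv_lhs => rw [h]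
    rw [add_mul, one_mul]
  have hgle : ∑ j, g j ≤ s := key
  have hga := hsplit g
  have haa := hsplit a
  -- assemble
  have hbig : (∑ j ∈ I, x j) + ((∑ j ∈ Iᶜ \ C, a j) + ((∑ j ∈ C, a j) + (r - 1) * d))
      ≤ (∑ j, a j) + ((r - 1) * d + d) := by
    calc (∑ j ∈ I, x j) + ((∑ j ∈ Iᶜ \ C, a j) + ((∑ j ∈ C, a j) + (r - 1) * d))
        = (∑ j ∈ I, x j) + ((∑ j ∈ Iᶜ \ C, a j) + (∑ j ∈ C, (a j + d))) := by
          rw [hCsum]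
      _ ≤ (∑ j ∈ I, g j) + ((∑ j ∈ Iᶜ \ C, g j) + (∑ j ∈ C, g j)) := by
          gcongr
      _ = ∑ j, g j := hga
      _ ≤ s := hgle
      _ = (∑ j, a j) + ((r - 1) * d + d) := by rw [hs, hrd]
  rw [← haa] at hbig
  set u := (r - 1) * d
  omega
end

section
/- Under the assumptions of Theorem 2 (A ⊆ ℕⁿ is r-wise s-union, P₁,…,P_n ∈ A with P_i = a + d·e_i as defined), for every I ⊆ [n] with 1 ≤ |I| ≤ n−r+1 one has max{∑_{i∈I} x_i : x ∈ A} = ∑_{i∈I} a_i + d. -/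
/-- Under the assumptions of Theorem 2, for every `I ⊆ [n]` with
`1 ≤ |I| ≤ n-r+1`, `max{∑_{i∈I} x_i : x ∈ A} = ∑_{i∈I} a_i + d`. -/
theorem stmt8 (n r s d : ℕ) (hr : 2 ≤ r) (hrn : r < n)
    (A : Set (Fin n → ℕ)) (hAfin : A.Finite) (hAne : A.Nonempty)
    (hunion : ∀ f : Fin r → (Fin n → ℕ), (∀ t, f t ∈ A) →
      (∑ j, Finset.univ.sup fun t => f t j) ≤ s)
    (m a : Fin n → ℕ)
    (hm : ∀ i, IsGreatest {v | ∃ x ∈ A, v = x i} (m i))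
    (hd : (∑ i, m i) = s + (n - r) * d)
    (ha : ∀ i, a i + d = m i)
    (hP : ∀ i : Fin n, (fun j => a j + if j = i then d else 0) ∈ A) :
    ∀ I : Finset (Fin n), 1 ≤ I.card → I.card ≤ n - r + 1 →
      IsGreatest {v | ∃ x ∈ A, v = ∑ i ∈ I, x i} ((∑ i ∈ I, a i) + d) := by
  -- s = ∑ a + r * d
  have hsum : (∑ i, m i) = (∑ i, a i) + n * d := by
    simp only [← ha, Finset.sum_add_distrib, Finset.sum_const, Finset.card_univ,
      Fintype.card_fin, smul_eq_mul]
  have hnd : n * d = r * d + (n - r) * d := by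
    rw [← Nat.add_mul, Nat.add_sub_cancel' hrn.le]
  have hs : s = (∑ i, a i) + r * d := by
    have h := hd
    rw [hsum, hnd, ← Nat.add_assoc] at h
    exact (Nat.add_right_cancel h).symm
  intro I hI1 hI2
  constructor
  · obtain ⟨i₀, hi₀⟩ := Finset.card_pos.mp hI1
    refine ⟨_, hP i₀, ?_⟩
    rw [Finset.sum_add_distrib, Finset.sum_ite_eq' I i₀ fun _ => d, if_pos hi₀]
  · rintro v ⟨x, hx, rfl⟩
    have hIc : r - 1 ≤ Iᶜ.card := by
      rw [Finset.card_compl, Fintype.card_fin]; omega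
    obtain ⟨J, hJsub, hJcard⟩ := Finset.exists_subset_card_eq hIc
    set e : Fin (r - 1) → Fin n := fun t => (J.orderIsoOfFin hJcard t : Fin n) with he
    have heJ : ∀ t, e t ∈ J := fun t => (J.orderIsoOfFin hJcard t).2
    set F : Fin r → Fin n → ℕ := fun t j =>
      if h : (t : ℕ) < r - 1 then a j + (if j = e ⟨t, h⟩ then d else 0) else x j with hF
    have hFA : ∀ t, F t ∈ A := by
      intro t
      by_cases h : (t : ℕ) < r - 1
      · simp only [hF, dif_pos h]; exact hP _
      · simp only [hF, dif_neg h]; exact hx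
    have key := hunion F hFA
    set S : Fin n → ℕ := fun j => Finset.univ.sup fun t => F t j with hS
    have hJI : ∀ j ∈ J, j ∉ I := fun j hj => Finset.mem_compl.mp (hJsub hj)
    -- pointwise lower bounds
    have h1 : ∀ j ∈ I, x j ≤ S j := by
      intro j hj
      have hlast : ¬ ((⟨r - 1, by omega⟩ : Fin r) : ℕ) < r - 1 := by simp
      have := Finset.le_sup (f := fun t => F t j)
        (Finset.mem_univ (⟨r - 1, by omega⟩ : Fin r))
      simp only [hF, dif_neg hlast] at this
      exact this
    have h2 : ∀ j ∈ J, a j + d ≤ S j := by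
      intro j hj
      set t : Fin (r - 1) := (J.orderIsoOfFin hJcard).symm ⟨j, hj⟩ with ht
      have het : e t = j := by
        simp only [he, ht, OrderIso.apply_symm_apply]
      have htlt : ((⟨(t : ℕ), by omega⟩ : Fin r) : ℕ) < r - 1 := t.isLt
      have := Finset.le_sup (f := fun t => F t j)
        (Finset.mem_univ (⟨(t : ℕ), by omega⟩ : Fin r))
      simp only [hF, dif_pos htlt, Fin.eta, het, if_pos rfl] at this
      exact this
    have h3 : ∀ j, a j ≤ S j := by
      intro j
      have h0 : ((⟨0, by omega⟩ : Fin r) : ℕ) < r - 1 := by simp; omega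
      have := Finset.le_sup (f := fun t => F t j)
        (Finset.mem_univ (⟨0, by omega⟩ : Fin r))
      simp only [hF, dif_pos h0] at this
      exact le_trans (Nat.le_add_right _ _) this
    -- lower bound function
    have hL : ∀ j, (if j ∈ I then x j else a j + (if j ∈ J then d else 0)) ≤ S j := by
      intro j
      by_cases hjI : j ∈ I
      · simpa [hjI] using h1 j hjI
      · by_cases hjJ : j ∈ J
        · simpa [hjI, hjJ] using h2 j hjJ
        · simpa [hjI, hjJ] using h3 j
    have hsumL : (∑ j, (if j ∈ I then x j else a j + (if j ∈ J then d else 0))) ≤ s :=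
      le_trans (Finset.sum_le_sum fun j _ => hL j) key
    -- compute the sum of L
    have hsplit : (∑ j, (if j ∈ I then x j else a j + (if j ∈ J then d else 0)))
        = (∑ j ∈ I, x j) + ((∑ j ∈ Iᶜ, a j) + (r - 1) * d) := by
      rw [← Finset.sum_add_sum_compl I]
      congr 1
      · exact Finset.sum_congr rfl fun j hj => by simp [hj]
      · rw [Finset.sum_congr rfl (g := fun j => a j + (if j ∈ J then d else 0))
          (fun j hj => by simp [Finset.mem_compl.mp hj]),
          Finset.sum_add_distrib, Finset.sum_ite_mem,
          Finset.inter_eq_right.mpr hJsub, Finset.sum_const, hJcard, smul_eq_mul]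
    have hacompl : (∑ i, a i) = (∑ j ∈ I, a j) + (∑ j ∈ Iᶜ, a j) :=
      (Finset.sum_add_sum_compl I a).symm
    rw [hsplit] at hsumL
    have hrd : r * d = (r - 1) * d + d := by
      conv_lhs => rw [show r = (r - 1) + 1 from by omega]
      ring
    rw [hs, hacompl, hrd] at hsumL
    linarith
end

section
/- Let n = r+1 and let A ⊆ ℕ^{r+1} be an r-wise s-union family, with d := |m| − s ≥ 0 and a_i := m_i − d ≥ 0 where m_i := max{x_i : x ∈ A}. Then every x ∈ A satisfies x_i ≤ a_i + d for all i, and x_i + x_j ≤ a_i + a_j + d for all i ≠ j; hence A ⊆ L(r, r+1, a, d). -/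
/-- For `n = r+1`: if `A ⊆ ℕ^{r+1}` is `r`-wise `s`-union, `d = |m| - s ≥ 0`
(encoded by `∑ m = s + d`) and `a_i = m_i - d ≥ 0` (encoded by `a_i + d = m_i`),
then every `x ∈ A` satisfies `x_i ≤ a_i + d` and `x_i + x_j ≤ a_i + a_j + d`
for `i ≠ j`; hence `A ⊆ L(r, r+1, a, d)`. -/
theorem stmt10 (r s d : ℕ) (hr : 2 ≤ r)
    (A : Set (Fin (r + 1) → ℕ)) (hAfin : A.Finite) (hAne : A.Nonempty)
    (hunion : ∀ f : Fin r → (Fin (r + 1) → ℕ), (∀ t, f t ∈ A) →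
      (∑ j, Finset.univ.sup fun t => f t j) ≤ s)
    (m a : Fin (r + 1) → ℕ)
    (hm : ∀ i, IsGreatest {v | ∃ x ∈ A, v = x i} (m i))
    (hd : (∑ i, m i) = s + d)
    (ha : ∀ i, a i + d = m i) :
    ∀ x ∈ A, (∀ i, x i ≤ a i + d) ∧
      (∀ i j, i ≠ j → x i + x j ≤ a i + a j + d) ∧
      (∀ I : Finset (Fin (r + 1)), 1 ≤ I.card → I.card ≤ 2 →
        ∑ i ∈ I, x i ≤ (∑ i ∈ I, a i) + d) := by
  intro x hx
  classical
  have hxm : ∀ i, x i ≤ m i := fun i => (hm i).2 ⟨x, hx, rfl⟩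
  have h1 : ∀ i, x i ≤ a i + d := fun i => (ha i) ▸ hxm i
  have hpair : ∀ i j : Fin (r + 1), i ≠ j → x i + x j ≤ a i + a j + d := by
    intro i j hij
    choose w hwA hwv using fun k => (hm k).1
    set f : Fin r → (Fin (r + 1) → ℕ) := fun t =>
      if j.succAbove t = i then x else w (j.succAbove t) with hf
    have hfA : ∀ t, f t ∈ A := by
      intro t; dsimp [f]; split
      · exact hx
      · exact hwA _
    have hs := hunion f hfA
    set L : Fin (r + 1) → ℕ := fun k =>
      if k = j then x j else if k = i then x i else m k with hL
    have hl : ∀ k, L k ≤ Finset.univ.sup (fun t => f t k) := by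
      intro k
      dsimp [L]
      by_cases hkj : k = j
      · simp only [hkj, if_pos rfl]
        obtain ⟨t, ht⟩ := Fin.exists_succAbove_eq hij
        have : f t = x := by dsimp [f]; rw [if_pos ht]
        calc x j = f t j := by rw [this]
          _ ≤ _ := Finset.le_sup (f := fun t => f t j) (Finset.mem_univ t)
      · rw [if_neg hkj]
        by_cases hki : k = i
        · rw [if_pos hki]
          obtain ⟨t, ht⟩ := Fin.exists_succAbove_eq hij
          have : f t = x := by dsimp [f]; rw [if_pos ht]
          calc x i = f t k := by rw [this, hki]
            _ ≤ _ := Finset.le_sup (f := fun t => f t k) (Finset.mem_univ t)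
        · rw [if_neg hki]
          obtain ⟨t, ht⟩ := Fin.exists_succAbove_eq hkj
          have : f t = w k := by dsimp [f]; rw [ht, if_neg hki]
          calc m k = w k k := hwv k
            _ = f t k := by rw [this]
            _ ≤ _ := Finset.le_sup (f := fun t => f t k) (Finset.mem_univ t)
    have hsumL : ∑ k, L k ≤ s :=
      le_trans (Finset.sum_le_sum fun k _ => hl k) hs
    have key : ∀ g : Fin (r + 1) → ℕ, ∑ k, g k =
        g i + g j + ∑ k ∈ (Finset.univ.erase i).erase j, g k := by
      intro g
      rw [← Finset.add_sum_erase _ g (Finset.mem_univ i),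
        ← Finset.add_sum_erase _ g
          (Finset.mem_erase.mpr ⟨hij.symm, Finset.mem_univ j⟩)]
      ring
    have hLsum : ∑ k, L k = x i + x j +
        ∑ k ∈ (Finset.univ.erase i).erase j, m k := by
      rw [key L]
      have h1 : L i = x i := by
        dsimp [L]; rw [if_neg hij, if_pos rfl]
      have h2 : L j = x j := by dsimp [L]; rw [if_pos rfl]
      have h3 : ∑ k ∈ (Finset.univ.erase i).erase j, L k =
          ∑ k ∈ (Finset.univ.erase i).erase j, m k := by
        apply Finset.sum_congr rfl
        intro k hk
        simp only [Finset.mem_erase, Finset.mem_univ, and_true] at hk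
        obtain ⟨hkj, hki⟩ := hk
        dsimp [L]; rw [if_neg hkj, if_neg hki]
      omega
    have hmsum : ∑ k, m k = m i + m j +
        ∑ k ∈ (Finset.univ.erase i).erase j, m k := key m
    have hai := ha i
    have haj := ha j
    omega
  refine ⟨h1, hpair, ?_⟩
  intro I hc1 hc2
  interval_cases hI : I.card
  · obtain ⟨i, rfl⟩ := Finset.card_eq_one.mp hI
    simpa using h1 i
  · obtain ⟨i, j, hij, rfl⟩ := Finset.card_eq_two.mp hI
    rw [Finset.sum_pair hij, Finset.sum_pair hij]
    exact hpair i j hij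
end

section
/- Let r ≥ 2, s = dr + p with 0 ≤ p < r, and let A ⊆ ℕⁿ be a down set that is t-wise (dt+p)-union for some 2 ≤ t ≤ r but not (t−1)-wise (d(t−1)+p)-union. Then there exists b ∈ ℕⁿ with |b| ≤ (t−1)s such that A ⊆ {x + y : x, y ∈ ℕⁿ, |x| ≤ d−1, y ≤ b coordinatewise}; consequently |A| ≤ C(n+d−1, d−1)·2^{rs}. -/
open Finset

lemma sum_le_card_aux (n k : ℕ) (S : Finset (Fin n → ℕ)) (hS : ∀ x ∈ S, ∑ i, x i ≤ k) :
    S.card ≤ (n + k).choose k := by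
  classical
  have key : S.card ≤ Fintype.card (Sym (Fin (n + 1)) k) := by
    rw [← Finset.card_univ]
    refine Finset.card_le_card_of_injOn
      (fun x => if h : ∑ i, x i ≤ k then
        ⟨(∑ i : Fin n, Multiset.replicate (x i) i.castSucc)
          + Multiset.replicate (k - ∑ i, x i) (Fin.last n), by
            simp [map_sum Multiset.card, Nat.add_sub_cancel' h]⟩
        else ⟨Multiset.replicate k (Fin.last n), by simp⟩)
      (fun _ _ => Finset.mem_univ _) ?_
    intro x hx y hy hxy
    simp only at hxy
    erw [dif_pos (hS x (Finset.mem_coe.mp hx)), dif_pos (hS y (Finset.mem_coe.mp hy))] at hxy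
    have hm := congrArg Sym.toMultiset hxy
    simp only [Sym.toMultiset] at hm
    funext i
    have hcx := congrArg (Multiset.count (i.castSucc)) hm
    simpa [Multiset.count_sum', Multiset.count_replicate, Fin.castSucc_inj,
      (Fin.castSucc_lt_last i).ne, (Fin.castSucc_lt_last i).ne', Finset.sum_ite_eq'] using hcx
  calc S.card ≤ Fintype.card (Sym (Fin (n + 1)) k) := key
    _ = (n + k).choose k := by
        rw [Sym.card_sym_eq_choose, Fintype.card_fin]
        congr 1
        omega

/-- If a down set `A ⊆ ℕⁿ` is `t`-wise `(dt+p)`-union but not `(t-1)`-wise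
`(d(t-1)+p)`-union (`2 ≤ t ≤ r`, `s = dr+p`, `p < r`), then there is `b` with
`|b| ≤ (t-1)s` such that every member of `A` is `x + y` with `|x| ≤ d-1` and
`y ≤ b`; consequently `|A| ≤ C(n+d-1, d-1) · 2^{rs}`. -/
theorem stmt12 (n r s d p t : ℕ) (hr : 2 ≤ r) (hp : p < r) (hs : s = d * r + p)
    (ht : 2 ≤ t) (htr : t ≤ r)
    (A : Set (Fin n → ℕ))
    (hdown : ∀ x ∈ A, ∀ y : Fin n → ℕ, y ≤ x → y ∈ A)
    (htwise : ∀ f : Fin t → (Fin n → ℕ), (∀ j, f j ∈ A) →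
      (∑ i, Finset.univ.sup fun j => f j i) ≤ d * t + p)
    (hnot : ¬ (∀ f : Fin (t - 1) → (Fin n → ℕ), (∀ j, f j ∈ A) →
      (∑ i, Finset.univ.sup fun j => f j i) ≤ d * (t - 1) + p)) :
    ∃ b : Fin n → ℕ, (∑ i, b i) ≤ (t - 1) * s ∧
      (∀ z ∈ A, ∃ x y : Fin n → ℕ, (∑ i, x i) ≤ d - 1 ∧ y ≤ b ∧ z = x + y) ∧
      A.ncard ≤ (n + d - 1).choose (d - 1) * 2 ^ (r * s) := by
  classical
  push_neg at hnot
  obtain ⟨f, hfA, hfgt⟩ := hnot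
  set b : Fin n → ℕ := fun i => Finset.univ.sup fun j => f j i with hbdef
  have h0 : (0 : ℕ) < t - 1 := by omega
  have hb_gt : d * (t - 1) + p < ∑ i, b i := hfgt
  -- b is bounded using t-wise condition with a padded family
  have hb_le : ∑ i, b i ≤ d * t + p := by
    set g : Fin t → (Fin n → ℕ) :=
      fun j => if h : (j : ℕ) < t - 1 then f ⟨j, h⟩ else f ⟨0, h0⟩ with hgdef
    have hgA : ∀ j, g j ∈ A := by
      intro j
      simp only [hgdef]
      split_ifs <;> exact hfA _
    have hsup : ∀ i, (Finset.univ.sup fun j => g j i) = b i := by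
      intro i
      apply le_antisymm
      · apply Finset.sup_le
        intro j _
        simp only [hgdef]
        split_ifs <;> exact Finset.le_sup (f := fun j => f j i) (Finset.mem_univ _)
      · apply Finset.sup_le
        intro j _
        have : f j i = g ⟨(j : ℕ), by omega⟩ i := by
          simp [hgdef, j.isLt]
        rw [this]
        exact Finset.le_sup (f := fun j => g j i) (Finset.mem_univ _)
    have := htwise g hgA
    calc ∑ i, b i = ∑ i, Finset.univ.sup fun j => g j i :=
          (Finset.sum_congr rfl fun i _ => (hsup i).symm)
      _ ≤ d * t + p := this
  have hmul : d * t = d * (t - 1) + d := by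
    conv_lhs => rw [show t = (t - 1) + 1 from by omega]
    ring
  have hd : 1 ≤ d := by omega
  -- the decomposition
  have hdecomp : ∀ z ∈ A, ∃ x y : Fin n → ℕ, (∑ i, x i) ≤ d - 1 ∧ y ≤ b ∧ z = x + y := by
    intro z hz
    refine ⟨fun i => z i - b i, fun i => min (z i) (b i), ?_,
      fun i => min_le_right _ _, funext fun i => by simp only [Pi.add_apply]; omega⟩
    set g : Fin t → (Fin n → ℕ) :=
      fun j => if h : (j : ℕ) < t - 1 then f ⟨j, h⟩ else z with hgdef
    have hgA : ∀ j, g j ∈ A := by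
      intro j
      simp only [hgdef]
      split_ifs
      · exact hfA _
      · exact hz
    have hsup : ∀ i, (Finset.univ.sup fun j => g j i) = b i + (z i - b i) := by
      intro i
      apply le_antisymm
      · apply Finset.sup_le
        intro j _
        simp only [hgdef]
        split_ifs
        · exact le_trans (Finset.le_sup (f := fun j => f j i) (Finset.mem_univ _))
            (Nat.le_add_right _ _)
        · omega
      · have hbi : b i ≤ Finset.univ.sup fun j => g j i := by
          apply Finset.sup_le
          intro j _
          have : f j i = g ⟨(j : ℕ), by omega⟩ i := by
            simp [hgdef, j.isLt]
          rw [this]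
          exact Finset.le_sup (f := fun j => g j i) (Finset.mem_univ _)
        have hzi : z i ≤ Finset.univ.sup fun j => g j i := by
          have : z i = g ⟨t - 1, by omega⟩ i := by
            simp [hgdef]
          rw [this]
          exact Finset.le_sup (f := fun j => g j i) (Finset.mem_univ _)
        omega
    have h2 := htwise g hgA
    rw [Finset.sum_congr rfl fun i _ => hsup i, Finset.sum_add_distrib] at h2
    show (∑ i, (z i - b i)) ≤ d - 1
    omega
  -- the sum bound on b
  have hb_bound : ∑ i, b i ≤ (t - 1) * s := by
    have h3 : d * t ≤ d * r := Nat.mul_le_mul_left d htr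
    have h4 : 1 * s ≤ (t - 1) * s := Nat.mul_le_mul_right s (by omega)
    have h5 : 1 * s = s := one_mul s
    linarith
  refine ⟨b, hb_bound, hdecomp, ?_⟩
  -- counting
  obtain ⟨k, rfl⟩ : ∃ k, d = k + 1 := ⟨d - 1, by omega⟩
  set Sx : Finset (Fin n → ℕ) :=
    (Fintype.piFinset fun _ : Fin n => Finset.range (k + 1)).filter
      (fun x => ∑ i, x i ≤ k) with hSx
  set Sy : Finset (Fin n → ℕ) := Fintype.piFinset fun i => Finset.range (b i + 1) with hSy
  set T : Finset (Fin n → ℕ) := (Sx ×ˢ Sy).image fun q => q.1 + q.2 with hT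
  have hsub : A ⊆ ↑T := by
    intro z hz
    obtain ⟨x, y, hx, hy, hxy⟩ := hdecomp z hz
    have hxk : ∑ i, x i ≤ k := by omega
    have hxS : x ∈ Sx := by
      rw [hSx, Finset.mem_filter]
      refine ⟨Fintype.mem_piFinset.mpr fun i => Finset.mem_range.mpr ?_, hxk⟩
      have h6 : x i ≤ ∑ j, x j :=
        Finset.single_le_sum (fun i _ => Nat.zero_le _) (Finset.mem_univ i)
      omega
    have hyS : y ∈ Sy := by
      refine Fintype.mem_piFinset.mpr fun i => Finset.mem_range.mpr ?_
      have h7 : y i ≤ b i := hy i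
      omega
    exact Finset.mem_coe.mpr (Finset.mem_image.mpr
      ⟨(x, y), Finset.mem_product.mpr ⟨hxS, hyS⟩, hxy.symm⟩)
  have h1 : A.ncard ≤ T.card := by
    have := Set.ncard_le_ncard hsub T.finite_toSet
    rwa [Set.ncard_coe_finset] at this
  have h2 : T.card ≤ Sx.card * Sy.card :=
    le_trans Finset.card_image_le (le_of_eq (Finset.card_product _ _))
  have h3 : Sx.card ≤ (n + k).choose k :=
    sum_le_card_aux n k Sx (fun x hx => (Finset.mem_filter.mp hx).2)
  have h4 : Sy.card ≤ 2 ^ (r * s) := by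
    have e1 : Sy.card = ∏ i, (b i + 1) := by
      rw [hSy, Fintype.card_piFinset]
      simp
    have e2 : ∏ i, (b i + 1) ≤ ∏ i, 2 ^ (b i) :=
      Finset.prod_le_prod' fun i _ => Nat.lt_two_pow_self (n := b i)
    have e3 : ∏ i : Fin n, 2 ^ (b i) = 2 ^ (∑ i, b i) := Finset.prod_pow_eq_pow_sum _ _ _
    have e4 : (2 : ℕ) ^ (∑ i, b i) ≤ 2 ^ (r * s) := by
      apply Nat.pow_le_pow_right (by norm_num)
      have : (t - 1) * s ≤ r * s := Nat.mul_le_mul_right s (by omega)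
      omega
    omega
  have hch : (n + (k + 1) - 1).choose (k + 1 - 1) = (n + k).choose k := by
    congr 1 <;> omega
  calc A.ncard ≤ Sx.card * Sy.card := le_trans h1 h2
    _ ≤ (n + k).choose k * 2 ^ (r * s) := Nat.mul_le_mul h3 h4
    _ = (n + (k + 1) - 1).choose (k + 1 - 1) * 2 ^ (r * s) := by rw [hch]
end

section
/- For fixed n, r, d and fixed weight |a| = w, the quantity |K(r,n,a,d)| = ∑_{j=0}^{n} C(d+j,j)·σ_{n−j}(a) + ∑_{i=1}^{⌊d/u⌋} ∑_{j=u+1}^{n} (C(d−ui+j, j) − C(d−ui+u, j))·σ_{n−j}(a + i·1), with u = n−r+1, is maximized over all a ∈ ℕⁿ with |a| = w exactly when a is a balanced partition, i.e., |a_i − a_j| ≤ 1 for all i, j. -/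
/-- The `k`-th elementary symmetric polynomial of `a : Fin n → ℕ`. -/
def esym (n k : ℕ) (a : Fin n → ℕ) : ℕ :=
  ∑ K ∈ (Finset.univ : Finset (Fin n)).powersetCard k, ∏ i ∈ K, a i

/-- The cardinality formula for `K(r,n,a,d)` from Lemma 2, with `u = n-r+1`. -/
def Ksize (n r d : ℕ) (a : Fin n → ℕ) : ℕ :=
  (∑ j ∈ Finset.range (n + 1), (d + j).choose j * esym n (n - j) a) +
  ∑ i ∈ Finset.Icc 1 (d / (n - r + 1)),
    ∑ j ∈ Finset.Icc (n - r + 2) n,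
      ((d - (n - r + 1) * i + j).choose j
        - (d - (n - r + 1) * i + (n - r + 1)).choose j) *
        esym n (n - j) (fun t => a t + i)

namespace Stmt14Aux

open Finset

/-! ### Elementary symmetric functions of multisets of naturals -/

lemma esymm_zero' (s : Multiset ℕ) : s.esymm 0 = 1 := by
  simp [Multiset.esymm, Multiset.powersetCard_zero_left]

lemma esymm_cons (a : ℕ) (s : Multiset ℕ) (k : ℕ) :
    (a ::ₘ s).esymm (k + 1) = s.esymm (k + 1) + a * s.esymm k := by
  rw [Multiset.esymm, Multiset.powersetCard_cons, Multiset.map_add, Multiset.sum_add,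
    Multiset.map_map]
  congr 1
  simp only [Function.comp, Multiset.prod_cons]
  rw [Multiset.sum_map_mul_left]
  rfl

lemma esym_eq (n k : ℕ) (a : Fin n → ℕ) :
    esym n k a = ((Finset.univ : Finset (Fin n)).val.map a).esymm k :=
  (Finset.esymm_map_val a Finset.univ k).symm

/-- key product inequality -/
lemma prod_ineq {x y : ℕ} (h : y + 2 ≤ x) : x * y + 1 ≤ (x - 1) * (y + 1) := by
  obtain ⟨e, rfl⟩ : ∃ e, x = y + 2 + e := ⟨x - (y + 2), by omega⟩
  have h1 : y + 2 + e - 1 = y + 1 + e := by omega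
  rw [h1]
  nlinarith

lemma esymm_one (a : ℕ) (s : Multiset ℕ) : (a ::ₘ s).esymm 1 = s.esymm 1 + a := by
  have h := esymm_cons a s 0
  rw [esymm_zero'] at h
  simpa using h

lemma esymm_expand (x y : ℕ) (s : Multiset ℕ) (k : ℕ) :
    (x ::ₘ y ::ₘ s).esymm (k + 1 + 1)
      = s.esymm (k + 1 + 1) + (x + y) * s.esymm (k + 1) + x * y * s.esymm k := by
  rw [esymm_cons x (y ::ₘ s) (k + 1), esymm_cons y s (k + 1), esymm_cons y s k]
  ring

/-- balancing move weakly increases every elementary symmetric function -/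
lemma esymm_move {x y : ℕ} (h : y + 2 ≤ x) (s : Multiset ℕ) (k : ℕ) :
    (x ::ₘ y ::ₘ s).esymm k ≤ ((x - 1) ::ₘ (y + 1) ::ₘ s).esymm k := by
  match k with
  | 0 => rw [esymm_zero', esymm_zero']
  | 1 =>
    rw [esymm_one, esymm_one, esymm_one, esymm_one]
    omega
  | (k + 2) =>
    have e2 : k + 2 = k + 1 + 1 := rfl
    rw [e2, esymm_expand x y s k, esymm_expand (x - 1) (y + 1) s k]
    have hxy : x - 1 + (y + 1) = x + y := by omega
    rw [hxy]
    have hp : x * y + 1 ≤ (x - 1) * (y + 1) := prod_ineq h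
    have h4 : x * y * s.esymm k ≤ (x - 1) * (y + 1) * s.esymm k :=
      Nat.mul_le_mul_right _ (by omega)
    omega

/-- balancing move strictly increases the second elementary symmetric function -/
lemma esymm_move_two {x y : ℕ} (h : y + 2 ≤ x) (s : Multiset ℕ) :
    (x ::ₘ y ::ₘ s).esymm 2 + 1 ≤ ((x - 1) ::ₘ (y + 1) ::ₘ s).esymm 2 := by
  have e2 : (2 : ℕ) = 0 + 1 + 1 := rfl
  rw [e2, esymm_expand x y s 0, esymm_expand (x - 1) (y + 1) s 0, esymm_zero']
  have hxy : x - 1 + (y + 1) = x + y := by omega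
  rw [hxy]
  have hp : x * y + 1 ≤ (x - 1) * (y + 1) := prod_ineq h
  have h6 : x * y * 1 = x * y := by ring
  have h7 : (x - 1) * (y + 1) * 1 = (x - 1) * (y + 1) := by ring
  rw [h6, h7]
  omega

/-! ### Decomposition of the multiset of values -/

lemma map_univ_decomp {n : ℕ} {i j : Fin n} (hij : i ≠ j) (f : Fin n → ℕ) :
    (Finset.univ : Finset (Fin n)).val.map f
      = f i ::ₘ f j ::ₘ (((Finset.univ.erase i).erase j).val.map f) := by
  have hi : i ∈ (Finset.univ : Finset (Fin n)).val := Finset.mem_univ i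
  have hj : j ∈ (Finset.univ.erase i : Finset (Fin n)).val :=
    Finset.mem_erase.2 ⟨hij.symm, Finset.mem_univ j⟩
  have h1 : (Finset.univ : Finset (Fin n)).val = i ::ₘ (Finset.univ.erase i).val := by
    rw [Finset.erase_val Finset.univ i, Multiset.cons_erase hi]
  have h2 : (Finset.univ.erase i : Finset (Fin n)).val
      = j ::ₘ ((Finset.univ.erase i).erase j).val := by
    rw [Finset.erase_val (Finset.univ.erase i) j, Multiset.cons_erase hj]
  rw [h1, Multiset.map_cons, h2, Multiset.map_cons]

/-- the balancing move on vectors -/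
def mv {n : ℕ} (c : Fin n → ℕ) (i j : Fin n) : Fin n → ℕ :=
  Function.update (Function.update c i (c i - 1)) j (c j + 1)

lemma mv_apply_i {n : ℕ} {c : Fin n → ℕ} {i j : Fin n} (hij : i ≠ j) :
    mv c i j i = c i - 1 := by
  rw [mv, Function.update_of_ne hij, Function.update_self]

lemma mv_apply_j {n : ℕ} (c : Fin n → ℕ) (i j : Fin n) : mv c i j j = c j + 1 := by
  rw [mv, Function.update_self]

lemma mv_apply_other {n : ℕ} {c : Fin n → ℕ} {i j t : Fin n} (hti : t ≠ i) (htj : t ≠ j) :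
    mv c i j t = c t := by
  rw [mv, Function.update_of_ne htj, Function.update_of_ne hti]

lemma rest_map_eq {n : ℕ} (i j : Fin n) (g h : Fin n → ℕ)
    (hgh : ∀ t : Fin n, t ≠ i → t ≠ j → g t = h t) :
    (((Finset.univ.erase i).erase j).val.map g)
      = (((Finset.univ.erase i).erase j).val.map h) := by
  apply Multiset.map_congr rfl
  intro t ht
  have hmem := Finset.mem_erase.1 (show t ∈ (Finset.univ.erase i).erase j from ht)
  have hmem2 := Finset.mem_erase.1 hmem.2
  exact hgh t hmem2.1 hmem.1

lemma mv_map {n : ℕ} {c : Fin n → ℕ} {i j : Fin n} (hij : i ≠ j) (hge : c j + 2 ≤ c i)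
    (m : ℕ) :
    (Finset.univ : Finset (Fin n)).val.map (fun t => mv c i j t + m)
      = ((c i + m) - 1) ::ₘ ((c j + m) + 1)
          ::ₘ (((Finset.univ.erase i).erase j).val.map (fun t => c t + m)) := by
  rw [map_univ_decomp hij (fun t => mv c i j t + m)]
  have h1 : mv c i j i + m = (c i + m) - 1 := by rw [mv_apply_i hij]; omega
  have h2 : mv c i j j + m = (c j + m) + 1 := by rw [mv_apply_j]; omega
  rw [h1, h2]
  congr 1
  congr 1
  exact rest_map_eq i j (fun t => mv c i j t + m) (fun t => c t + m)
    (fun t hti htj => by show mv c i j t + m = c t + m; rw [mv_apply_other hti htj])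

lemma mv_map0 {n : ℕ} {c : Fin n → ℕ} {i j : Fin n} (hij : i ≠ j) :
    (Finset.univ : Finset (Fin n)).val.map (mv c i j)
      = (c i - 1) ::ₘ (c j + 1)
          ::ₘ (((Finset.univ.erase i).erase j).val.map c) := by
  rw [map_univ_decomp hij (mv c i j), mv_apply_i hij, mv_apply_j]
  congr 1
  congr 1
  exact rest_map_eq i j (mv c i j) c (fun t hti htj => mv_apply_other hti htj)

lemma mv_esym_le {n : ℕ} {c : Fin n → ℕ} {i j : Fin n} (hij : i ≠ j)
    (hge : c j + 2 ≤ c i) (k m : ℕ) :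
    esym n k (fun t => c t + m) ≤ esym n k (fun t => mv c i j t + m) := by
  rw [esym_eq, esym_eq, mv_map hij hge m, map_univ_decomp hij (fun t => c t + m)]
  exact esymm_move (by omega) _ k

lemma mv_esym2_lt {n : ℕ} {c : Fin n → ℕ} {i j : Fin n} (hij : i ≠ j)
    (hge : c j + 2 ≤ c i) :
    esym n 2 c + 1 ≤ esym n 2 (mv c i j) := by
  rw [esym_eq, esym_eq, mv_map0 hij, map_univ_decomp hij c]
  exact esymm_move_two hge _

lemma mv_sum {n : ℕ} {c : Fin n → ℕ} {i j : Fin n} (hij : i ≠ j)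
    (hge : c j + 2 ≤ c i) :
    (∑ t, mv c i j t) = ∑ t, c t := by
  rw [← Finset.sum_map_val, ← Finset.sum_map_val, mv_map0 hij, map_univ_decomp hij c,
    Multiset.sum_cons, Multiset.sum_cons, Multiset.sum_cons, Multiset.sum_cons]
  omega

lemma mv_var {n : ℕ} {c : Fin n → ℕ} {i j : Fin n} (hij : i ≠ j)
    (hge : c j + 2 ≤ c i) :
    (∑ t, (mv c i j t) ^ 2) < ∑ t, (c t) ^ 2 := by
  rw [← Finset.sum_map_val, ← Finset.sum_map_val,
    map_univ_decomp hij (fun t => (mv c i j t) ^ 2),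
    map_univ_decomp hij (fun t => (c t) ^ 2), Multiset.sum_cons, Multiset.sum_cons,
    Multiset.sum_cons, Multiset.sum_cons, mv_apply_i hij, mv_apply_j]
  have hrest := rest_map_eq i j (fun t => (mv c i j t) ^ 2) (fun t => (c t) ^ 2)
    (fun t hti htj => by show (mv c i j t) ^ 2 = (c t) ^ 2; rw [mv_apply_other hti htj])
  rw [hrest]
  have : (c i - 1) ^ 2 + (c j + 1) ^ 2 < (c i) ^ 2 + (c j) ^ 2 := by
    obtain ⟨e, he⟩ : ∃ e, c i = c j + 2 + e := ⟨c i - (c j + 2), by omega⟩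
    rw [he]
    have h2 : c j + 2 + e - 1 = c j + 1 + e := by omega
    rw [h2]
    nlinarith
  omega

/-! ### Reaching a balanced vector -/

lemma toBalanced_aux {n : ℕ} :
    ∀ (V : ℕ) (c : Fin n → ℕ), (∑ t, (c t) ^ 2) ≤ V →
      ∃ b : Fin n → ℕ, (∀ i j, b i ≤ b j + 1) ∧ (∑ t, b t) = (∑ t, c t) ∧
        ∀ k m, esym n k (fun t => c t + m) ≤ esym n k (fun t => b t + m) := by
  intro V
  induction V with
  | zero =>
    intro c hc
    refine ⟨c, fun i j => ?_, rfl, fun k m => le_rfl⟩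
    have hz : ∀ t ∈ (Finset.univ : Finset (Fin n)), (c t) ^ 2 = 0 := by
      rw [← Finset.sum_eq_zero_iff]
      omega
    have hi := hz i (Finset.mem_univ i)
    have hj := hz j (Finset.mem_univ j)
    nlinarith
  | succ V ih =>
    intro c hc
    by_cases hb : ∀ i j, c i ≤ c j + 1
    · exact ⟨c, hb, rfl, fun k m => le_rfl⟩
    · push_neg at hb
      obtain ⟨i, j, hij'⟩ := hb
      have hge : c j + 2 ≤ c i := by omega
      have hij : i ≠ j := by rintro rfl; omega
      have hvar := mv_var hij hge
      obtain ⟨b, h1, h2, h3⟩ := ih (mv c i j) (by omega)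
      exact ⟨b, h1, by rw [h2, mv_sum hij hge],
        fun k m => le_trans (mv_esym_le hij hge k m) (h3 k m)⟩

/-! ### Balanced vectors with the same sum have the same value multiset -/

lemma balanced_canonical {n : ℕ} (hn : 0 < n) (b : Fin n → ℕ)
    (hb : ∀ i j, b i ≤ b j + 1) :
    ∃ m t : ℕ, t < n ∧ (∑ x, b x) = n * m + t ∧
      (Finset.univ : Finset (Fin n)).val.map b
        = Multiset.replicate (n - t) m + Multiset.replicate t (m + 1) := by
  have hne : (Finset.univ : Finset (Fin n)).Nonempty := ⟨⟨0, hn⟩, Finset.mem_univ _⟩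
  obtain ⟨i0, _, hmin⟩ := Finset.exists_min_image Finset.univ b hne
  set m := b i0 with hm
  set S := (Finset.univ : Finset (Fin n)).val.map b with hS
  have hmem : ∀ x ∈ S, x = m ∨ x = m + 1 := by
    intro x hx
    obtain ⟨t, _, rfl⟩ := Multiset.mem_map.1 hx
    have h1 := hb t i0
    have h2 := hmin t (Finset.mem_univ t)
    omega
  set t := S.count (m + 1) with ht
  set c1 := S.count m with hc1
  have hSeq : S = Multiset.replicate c1 m + Multiset.replicate t (m + 1) := by
    ext x
    rw [Multiset.count_add, Multiset.count_replicate, Multiset.count_replicate]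
    by_cases hx1 : x = m
    · subst hx1
      split_ifs <;> omega
    · by_cases hx2 : x = m + 1
      · subst hx2
        split_ifs <;> omega
      · have hnot : x ∉ S := fun hxS => by rcases hmem x hxS with h | h <;> omega
        rw [Multiset.count_eq_zero.2 hnot]
        split_ifs <;> omega
  have hcard : Multiset.card S = n := by
    rw [hS, Multiset.card_map]
    simp
  have hcard2 : c1 + t = n := by
    rw [hSeq] at hcard
    simpa using hcard
  have hc1pos : 0 < c1 := by
    rw [hc1]
    apply Multiset.count_pos.2
    exact Multiset.mem_map.2 ⟨i0, Finset.mem_univ i0, rfl⟩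
  have hsum : (∑ x, b x) = n * m + t := by
    rw [← Finset.sum_map_val, ← hS, hSeq, Multiset.sum_add, Multiset.sum_replicate,
      Multiset.sum_replicate, smul_eq_mul, smul_eq_mul]
    have : c1 * m + t * (m + 1) = (c1 + t) * m + t := by ring
    rw [this, hcard2]
  refine ⟨m, t, by omega, hsum, ?_⟩
  rw [hSeq]
  congr 2
  omega

lemma balanced_map_eq {n : ℕ} (hn : 0 < n) (b b' : Fin n → ℕ)
    (hb : ∀ i j, b i ≤ b j + 1) (hb' : ∀ i j, b' i ≤ b' j + 1)
    (hs : (∑ x, b x) = ∑ x, b' x) :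
    (Finset.univ : Finset (Fin n)).val.map b
      = (Finset.univ : Finset (Fin n)).val.map b' := by
  obtain ⟨m, t, htn, hsum, hmap⟩ := balanced_canonical hn b hb
  obtain ⟨m', t', htn', hsum', hmap'⟩ := balanced_canonical hn b' hb'
  have heq : n * m + t = n * m' + t' := by rw [← hsum, ← hsum', hs]
  have hmm : m = m' := by
    by_contra hne
    rcases Nat.lt_or_ge m m' with h | h
    · have h1 : n * (m + 1) ≤ n * m' := Nat.mul_le_mul_left n h
      have h2 : n * (m + 1) = n * m + n := by ring
      omega
    · have h : m' < m := by omega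
      have h1 : n * (m' + 1) ≤ n * m := Nat.mul_le_mul_left n h
      have h2 : n * (m' + 1) = n * m' + n := by ring
      omega
  subst hmm
  have htt : t = t' := by omega
  subst htt
  rw [hmap, hmap']

/-! ### Monotonicity of Ksize -/

lemma esym_shift_zero {n : ℕ} (c : Fin n → ℕ) : (fun t => c t + 0) = c := by
  funext t; omega

lemma Ksize_mono {n r d : ℕ} {c b : Fin n → ℕ}
    (h : ∀ k m, esym n k (fun t => c t + m) ≤ esym n k (fun t => b t + m)) :
    Ksize n r d c ≤ Ksize n r d b := by
  have h0 : ∀ k, esym n k c ≤ esym n k b := by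
    intro k
    have := h k 0
    rwa [esym_shift_zero, esym_shift_zero] at this
  refine Nat.add_le_add ?_ ?_
  · exact Finset.sum_le_sum fun j _ => Nat.mul_le_mul_left _ (h0 _)
  · exact Finset.sum_le_sum fun i _ =>
      Finset.sum_le_sum fun j _ => Nat.mul_le_mul_left _ (h _ i)

lemma Ksize_eq_of_map_eq {n r d : ℕ} {c b : Fin n → ℕ}
    (h : (Finset.univ : Finset (Fin n)).val.map c
        = (Finset.univ : Finset (Fin n)).val.map b) :
    Ksize n r d c = Ksize n r d b := by
  have hes : ∀ k m, esym n k (fun t => c t + m) = esym n k (fun t => b t + m) := by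
    intro k m
    rw [esym_eq, esym_eq]
    congr 1
    have h1 : (Finset.univ : Finset (Fin n)).val.map (fun t => c t + m)
        = ((Finset.univ : Finset (Fin n)).val.map c).map (fun x => x + m) := by
      rw [Multiset.map_map]; rfl
    have h2 : (Finset.univ : Finset (Fin n)).val.map (fun t => b t + m)
        = ((Finset.univ : Finset (Fin n)).val.map b).map (fun x => x + m) := by
      rw [Multiset.map_map]; rfl
    rw [h1, h2, h]
  exact le_antisymm (Ksize_mono fun k m => (hes k m).le)
    (Ksize_mono fun k m => (hes k m).ge)

lemma Ksize_lt {n r d : ℕ} (hn : 2 ≤ n) {c : Fin n → ℕ} {i j : Fin n}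
    (hij : i ≠ j) (hge : c j + 2 ≤ c i) :
    Ksize n r d c < Ksize n r d (mv c i j) := by
  have h0 : ∀ k, esym n k c ≤ esym n k (mv c i j) := by
    intro k
    have := mv_esym_le hij hge k 0
    rwa [esym_shift_zero, esym_shift_zero] at this
  apply Nat.add_lt_add_of_lt_of_le
  · apply Finset.sum_lt_sum
    · intro x _
      exact Nat.mul_le_mul_left _ (h0 _)
    · refine ⟨n - 2, Finset.mem_range.2 (by omega), ?_⟩
      have h2 : n - (n - 2) = 2 := by omega
      rw [h2]
      have hcpos : 0 < (d + (n - 2)).choose (n - 2) := Nat.choose_pos (by omega)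
      have hlt : esym n 2 c < esym n 2 (mv c i j) := mv_esym2_lt hij hge
      exact mul_lt_mul_of_pos_left hlt hcpos
  · exact Finset.sum_le_sum fun x _ =>
      Finset.sum_le_sum fun y _ => Nat.mul_le_mul_left _ (mv_esym_le hij hge _ x)

end Stmt14Aux

/-- For fixed `n, r, d` and fixed weight `w`, `|K(r,n,a,d)|` is maximized over
all `a ∈ ℕⁿ` with `|a| = w` exactly when `a` is a balanced partition. -/
theorem stmt14 (n r d w : ℕ) (hr : 2 ≤ r) (hrn : r ≤ n)
    (a : Fin n → ℕ) (ha : (∑ i, a i) = w) :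
    ((∀ a' : Fin n → ℕ, (∑ i, a' i) = w → Ksize n r d a' ≤ Ksize n r d a) ↔
      ∀ i j, |(a i : ℤ) - (a j : ℤ)| ≤ 1) := by
  have hn : 2 ≤ n := le_trans hr hrn
  constructor
  · intro hmax i j
    by_contra hcon
    rw [abs_le] at hcon
    have h2 : a j + 2 ≤ a i ∨ a i + 2 ≤ a j := by omega
    rcases h2 with h2 | h2
    · have hij : i ≠ j := by rintro rfl; omega
      have hsum : (∑ t, Stmt14Aux.mv a i j t) = w := by
        rw [Stmt14Aux.mv_sum hij h2, ha]
      have hle := hmax (Stmt14Aux.mv a i j) hsum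
      have hlt := Stmt14Aux.Ksize_lt (r := r) (d := d) hn hij h2
      omega
    · have hij : j ≠ i := by rintro rfl; omega
      have hsum : (∑ t, Stmt14Aux.mv a j i t) = w := by
        rw [Stmt14Aux.mv_sum hij h2, ha]
      have hle := hmax (Stmt14Aux.mv a j i) hsum
      have hlt := Stmt14Aux.Ksize_lt (r := r) (d := d) hn hij h2
      omega
  · intro hbal a' hsa'
    obtain ⟨b, hbbal, hbsum, hbes⟩ :=
      Stmt14Aux.toBalanced_aux (∑ t, (a' t) ^ 2) a' le_rfl
    have h1 : Ksize n r d a' ≤ Ksize n r d b := Stmt14Aux.Ksize_mono hbes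
    have habal : ∀ i j, a i ≤ a j + 1 := by
      intro i j
      have := hbal i j
      rw [abs_le] at this
      omega
    have hmapeq : (Finset.univ : Finset (Fin n)).val.map b
        = (Finset.univ : Finset (Fin n)).val.map a :=
      Stmt14Aux.balanced_map_eq (by omega) b a hbbal habal
        (by rw [hbsum, hsa', ha])
    have h2 : Ksize n r d b = Ksize n r d a :=
      Stmt14Aux.Ksize_eq_of_map_eq hmapeq
    omega
end

section
/- Let u₁ ≥ u₂ ≥ ⋯ ≥ u_r ≥ 0 be integers with u_j ≤ ⌊d/u⌋ where u = n−r+1 ≥ 1, and let x_j ∈ U(a + u_j·1, d − u·u_j) for j = 1,…,r, where a ∈ ℕⁿ with |a| = s − rd. Then |x₁ ∨ ⋯ ∨ x_r| ≤ |a + u₁·1| + ∑_{j=1}^{r} ((d − u·u_j) − (u₁ − u_j)) = s − (n−r)·∑_{j=2}^{r} u_j ≤ s. -/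
lemma sum_tsub_le' {α : Type*} (s : Finset α) (f : α → ℕ) (c : ℕ) :
    ∑ i ∈ s, (f i - c) ≤ (∑ i ∈ s, f i) - c := by
  induction s using Finset.cons_induction with
  | empty => simp
  | cons a s h ih =>
    rw [Finset.sum_cons, Finset.sum_cons]
    omega

/-- Computational core of Claim 1: if `u₁ ≥ ⋯ ≥ u_r ≥ 0` with
`u_j ≤ ⌊d/(n-r+1)⌋` and `x_j ∈ U(a + u_j·1, d - (n-r+1)·u_j)` where
`|a| = s - rd`, then `|x₁ ∨ ⋯ ∨ x_r| + (n-r)·∑_{j=2}^{r} u_j ≤ s`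
(in particular `|x₁ ∨ ⋯ ∨ x_r| ≤ s`). -/
theorem stmt17 (n r s d : ℕ) (hr : 2 ≤ r) (hrn : r ≤ n)
    (a : Fin n → ℕ) (ha : (∑ i, a i) + r * d = s)
    (v : Fin r → ℕ)
    (hanti : ∀ j k : Fin r, j ≤ k → v k ≤ v j)
    (hv : ∀ j, v j ≤ d / (n - r + 1))
    (x : Fin r → (Fin n → ℕ))
    (hx : ∀ j, ∃ ε : Fin n → ℕ, (∑ t, ε t) = d - (n - r + 1) * v j ∧
      x j = fun t => a t + v j + ε t) :
    (∑ t, Finset.univ.sup fun j => x j t) +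
      (n - r) * (∑ j ∈ Finset.univ.filter (fun j : Fin r => (j : ℕ) ≠ 0), v j)
      ≤ s := by
  choose ε hε hxe using hx
  set u : ℕ := n - r + 1 with hu_def
  set m : ℕ := n - r with hm_def
  have hum : u = m + 1 := rfl
  let j0 : Fin r := ⟨0, by omega⟩
  have hv0 : ∀ j : Fin r, v j ≤ v j0 := fun j => hanti j0 j (by simp [Fin.le_def, j0])
  have hud : ∀ j : Fin r, u * v j ≤ d := by
    intro j
    have h := (Nat.le_div_iff_mul_le (k := u) (by omega)).mp (hv j)
    calc u * v j = v j * u := Nat.mul_comm _ _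
      _ ≤ d := h
  -- per-j bound on truncated part
  set T : Fin r → ℕ := fun j => (d - u * v j) - (v j0 - v j) with hT
  have hstep : ∀ j, (∑ t, (x j t - (a t + v j0))) ≤ T j := by
    intro j
    have heq : ∀ t, x j t - (a t + v j0) = ε j t - (v j0 - v j) := by
      intro t
      have := hv0 j
      rw [hxe j]
      simp only
      omega
    calc (∑ t, (x j t - (a t + v j0)))
        = ∑ t, (ε j t - (v j0 - v j)) := by simp_rw [heq]
      _ ≤ (∑ t, ε j t) - (v j0 - v j) := sum_tsub_le' _ _ _
      _ = T j := by rw [hε j]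
  -- bound the sup pointwise
  have hsup : ∀ t, (Finset.univ.sup fun j => x j t) ≤
      a t + v j0 + ∑ j, (x j t - (a t + v j0)) := by
    intro t
    apply Finset.sup_le
    intro j _
    have h1 : x j t - (a t + v j0) ≤ ∑ j', (x j' t - (a t + v j0)) :=
      Finset.single_le_sum (f := fun j' => x j' t - (a t + v j0))
        (fun _ _ => Nat.zero_le _) (Finset.mem_univ j)
    omega
  have hmain : (∑ t, Finset.univ.sup fun j => x j t)
      ≤ (∑ i, a i) + n * v j0 + ∑ j, T j := by
    calc (∑ t, Finset.univ.sup fun j => x j t)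
        ≤ ∑ t, (a t + v j0 + ∑ j, (x j t - (a t + v j0))) :=
          Finset.sum_le_sum (fun t _ => hsup t)
      _ = (∑ i, a i) + n * v j0 + ∑ t, ∑ j, (x j t - (a t + v j0)) := by
          rw [Finset.sum_add_distrib, Finset.sum_add_distrib, Finset.sum_const,
            Finset.card_univ, Fintype.card_fin, smul_eq_mul]
      _ = (∑ i, a i) + n * v j0 + ∑ j, ∑ t, (x j t - (a t + v j0)) := by
          rw [Finset.sum_comm]
      _ ≤ (∑ i, a i) + n * v j0 + ∑ j, T j := by
          gcongr with j _
          exact hstep j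
  -- per-j exact value of T
  have hTval : ∀ j, T j + v j0 + m * v j = d := by
    intro j
    have h1 : u * v j ≤ d := hud j
    have h2 : v j ≤ v j0 := hv0 j
    have h3 : u * v j0 ≤ d := hud j0
    have h4 : m * v j ≤ m * v j0 := Nat.mul_le_mul_left m h2
    have e1 : u * v j = m * v j + v j := by rw [hum]; ring
    have e2 : u * v j0 = m * v j0 + v j0 := by rw [hum]; ring
    simp only [hT]
    generalize u * v j = C at *
    generalize u * v j0 = D at *
    generalize m * v j = A at *
    generalize m * v j0 = B at *
    omega
  have hTsum : (∑ j, T j) + r * v j0 + m * (∑ j, v j) = r * d := by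
    have := Finset.sum_congr rfl (fun j (_ : j ∈ (Finset.univ : Finset (Fin r))) => (hTval j).symm)
    simp only [Finset.sum_add_distrib, Finset.sum_const, Finset.card_univ,
      Fintype.card_fin, smul_eq_mul, ← Finset.mul_sum] at this
    linarith
  -- split the v-sum
  have hsplit : v j0 + (∑ j ∈ Finset.univ.filter (fun j : Fin r => (j : ℕ) ≠ 0), v j)
      = ∑ j, v j := by
    have h0 : (Finset.univ.filter (fun j : Fin r => ¬ ((j : ℕ) ≠ 0))) = {j0} := by
      ext j
      simp [Fin.ext_iff, j0]
    rw [← Finset.sum_filter_add_sum_filter_not Finset.univ (fun j : Fin r => (j : ℕ) ≠ 0) v,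
      h0, Finset.sum_singleton]
    omega
  set S' := ∑ j ∈ Finset.univ.filter (fun j : Fin r => (j : ℕ) ≠ 0), v j
  have hmv : m * (∑ j, v j) = m * v j0 + m * S' := by
    rw [← hsplit, Nat.mul_add]
  have hn : n * v j0 = r * v j0 + m * v j0 := by
    have : n = r + m := by omega
    rw [this, Nat.add_mul]
  linarith
end
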